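/- arXiv:2105.13587 — 3 statements merged into one kernel-verified Lean document; each statement's English description precedes it below -/
import Mathlib

section
/- Let i : X → Y be a pro-open immersion of quasi-compact schemes. If Y is a noetherian scheme, then X is a noetherian scheme. -/
open AlgebraicGeometry CategoryTheory

open Localization

section Alg
variable {A B : Type*} [CommRing A] [CommRing B] (f : A →+* B)

theorem step1 (hinj : Function.Injective (PrimeSpectrum.comap f))
    (hloc : ∀ q : PrimeSpectrum B, Function.Bijective
      (Localization.localRingHom (PrimeSpectrum.comap f q).asIdeal q.asIdeal f rfl))
    (q q' : PrimeSpectrum B)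
    (hle : (PrimeSpectrum.comap f q').asIdeal ≤ (PrimeSpectrum.comap f q).asIdeal) :
    q'.asIdeal ≤ q.asIdeal := by
  set p : Ideal A := (PrimeSpectrum.comap f q).asIdeal with hp
  set p' : Ideal A := (PrimeSpectrum.comap f q').asIdeal with hp'
  haveI : p.IsPrime := (PrimeSpectrum.comap f q).isPrime
  haveI : p'.IsPrime := (PrimeSpectrum.comap f q').isPrime
  have hd : Disjoint (p.primeCompl : Set A) (p' : Set A) := by
    rw [Set.disjoint_left]; intro a ha ha'
    exact ha (hle ha')
  have hp''prime : (p'.map (algebraMap A (Localization.AtPrime p))).IsPrime :=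
    IsLocalization.isPrime_of_isPrime_disjoint p.primeCompl _ p' inferInstance hd
  have hcomap : (p'.map (algebraMap A (Localization.AtPrime p))).comap
      (algebraMap A (Localization.AtPrime p)) = p' :=
    IsLocalization.under_map_of_isPrime_disjoint p.primeCompl _ inferInstance hd
  set T := RingEquiv.ofBijective _ (hloc q) with hT
  set Q : Ideal (Localization.AtPrime q.asIdeal) :=
    (p'.map (algebraMap A (Localization.AtPrime p))).comap (T.symm : _ →+* _) with hQ
  have hQprime : Q.IsPrime := Ideal.comap_isPrime _ _
  set q'' : Ideal B := Q.comap (algebraMap B (Localization.AtPrime q.asIdeal)) with hq''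
  have hq''p : q''.IsPrime ∧ Disjoint (q.asIdeal.primeCompl : Set B) (q'' : Set B) :=
    (IsLocalization.isPrime_iff_isPrime_disjoint q.asIdeal.primeCompl _ Q).mp hQprime
  have hq''le : q'' ≤ q.asIdeal := by
    intro b hb
    by_contra hbq
    exact Set.disjoint_left.mp hq''p.2 hbq hb
  have hTQ : Q.comap (T : _ →+* _) = p'.map (algebraMap A (Localization.AtPrime p)) := by
    rw [hQ, Ideal.comap_comap]
    have h1 : ((T.symm : Localization.AtPrime q.asIdeal →+* Localization.AtPrime p).comp
        (T : Localization.AtPrime p →+* Localization.AtPrime q.asIdeal))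
        = RingHom.id (Localization.AtPrime p) := by
      ext x; exact T.symm_apply_apply x
    rw [h1, Ideal.comap_id]
  have hcomm : (algebraMap B (Localization.AtPrime q.asIdeal)).comp f
      = (T : _ →+* _).comp (algebraMap A (Localization.AtPrime p)) := by
    ext a
    simp only [RingHom.coe_comp, Function.comp_apply]
    exact (Localization.localRingHom_to_map p q.asIdeal f rfl a).symm
  have hfinal : q''.comap f = p' := by
    rw [hq'', Ideal.comap_comap, hcomm, ← Ideal.comap_comap, hTQ, hcomap]
  haveI := hq''p.1
  have heq := hinj (a₁ := ⟨q'', hq''p.1⟩) (a₂ := q') (by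
    apply PrimeSpectrum.ext
    show q''.comap f = q'.asIdeal.comap f
    rw [hfinal]; rfl)
  have : q'' = q'.asIdeal := congrArg PrimeSpectrum.asIdeal heq
  rwa [← this]

end Alg

section Alg2
variable {A B : Type*} [CommRing A] [CommRing B] (f : A →+* B)

/-- Step 2: annihilators meet the image multiplicative set. -/
theorem step2 (hinj : Function.Injective (PrimeSpectrum.comap f))
    (hloc : ∀ q : PrimeSpectrum B, Function.Bijective
      (Localization.localRingHom (PrimeSpectrum.comap f q).asIdeal q.asIdeal f rfl))
    (q : PrimeSpectrum B) (b u : B) (hu : u ∉ q.asIdeal) (hub : u * b = 0) :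
    ∃ t : A, t ∉ (PrimeSpectrum.comap f q).asIdeal ∧ f t * b = 0 := by
  by_contra hcon
  push_neg at hcon
  set p : Ideal A := (PrimeSpectrum.comap f q).asIdeal with hp
  set N : Submonoid B := p.primeCompl.map f with hN
  set Ann : Ideal B := (⊥ : Ideal B).colon (Ideal.span {b}) with hAnn
  have hdisj : Disjoint (Ann : Set B) (N : Set B) := by
    rw [Set.disjoint_left]
    rintro c hc ⟨t, ht, rfl⟩
    have : f t * b = 0 := by
      have := (Ideal.mem_colon_span_singleton).mp hc
      simpa using this
    exact hcon t ht this
  obtain ⟨q', hq'prime, hq'le, hq'disj⟩ := Ideal.exists_le_prime_disjoint _ N hdisj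
  haveI := hq'prime
  have hcomaple : (PrimeSpectrum.comap f ⟨q', hq'prime⟩).asIdeal ≤ p := by
    intro a ha
    by_contra hap
    exact Set.disjoint_left.mp hq'disj ha ⟨a, hap, rfl⟩
  have hle : q' ≤ q.asIdeal := step1 f hinj hloc q ⟨q', hq'prime⟩ hcomaple
  have hu' : u ∈ Ann := by
    rw [hAnn, Ideal.mem_colon_span_singleton]
    simpa using hub
  exact hu (hle (hq'le hu'))

/-- The main algebra lemma. -/
theorem keyAlg [IsNoetherianRing A]
    (hinj : Function.Injective (PrimeSpectrum.comap f))
    (hloc : ∀ q : PrimeSpectrum B, Function.Bijective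
      (Localization.localRingHom (PrimeSpectrum.comap f q).asIdeal q.asIdeal f rfl)) :
    IsNoetherianRing B := by
  rw [isNoetherianRing_iff_ideal_fg]
  intro J
  have hJ : J = (J.comap f).map f := by
    refine le_antisymm ?_ Ideal.map_comap_le
    intro b hb
    by_contra hbJ
    set J' : Ideal B := (J.comap f).map f with hJ'
    set I : Ideal B := J'.colon (Ideal.span {b}) with hI
    have hInt : I ≠ ⊤ := by
      intro h
      apply hbJ
      have : (1 : B) ∈ I := h ▸ trivial
      simpa using (Ideal.mem_colon_span_singleton).mp this
    obtain ⟨q, hqmax, hqI⟩ := Ideal.exists_le_maximal I hInt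
    haveI := hqmax.isPrime
    set qP : PrimeSpectrum B := ⟨q, hqmax.isPrime⟩ with hqP
    set p : Ideal A := (PrimeSpectrum.comap f qP).asIdeal with hp
    haveI : p.IsPrime := (PrimeSpectrum.comap f qP).isPrime
    set N : Submonoid B := p.primeCompl.map f with hN
    have hNle : N ≤ q.primeCompl := by
      rintro _ ⟨t, ht, rfl⟩
      exact ht
    -- the maps A_p → B_N → B_q
    have hle1 : p.primeCompl ≤ N.comap f := fun t ht => ⟨t, ht, rfl⟩
    set h1 : Localization.AtPrime p →+* Localization N :=
      IsLocalization.map (Localization N) f hle1 with hh1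
    set g1 : Localization N →+* Localization.AtPrime q :=
      IsLocalization.map (T := q.primeCompl) (Localization.AtPrime q) (RingHom.id B)
        (le_trans hNle le_rfl) with hg1
    have hcompeq : g1.comp h1 = Localization.localRingHom p qP.asIdeal f rfl := by
      apply IsLocalization.ringHom_ext p.primeCompl
      ext a
      simp only [RingHom.coe_comp, Function.comp_apply, hh1, hg1, IsLocalization.map_eq,
        RingHom.id_apply]
      exact (Localization.localRingHom_to_map p qP.asIdeal f rfl a).symm
    have hg1inj : Function.Injective g1 := by
      intro x y hxy
      obtain ⟨⟨bx, sx⟩, rfl⟩ := IsLocalization.mk'_surjective N x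
      obtain ⟨⟨by', sy⟩, rfl⟩ := IsLocalization.mk'_surjective N y
      dsimp only at hxy ⊢
      rw [hg1, IsLocalization.map_mk', IsLocalization.map_mk'] at hxy
      rw [IsLocalization.mk'_eq_iff_eq] at hxy ⊢
      obtain ⟨c, hc⟩ := (IsLocalization.eq_iff_exists q.primeCompl _).mp hxy
      simp only [RingHom.id_apply] at hc
      obtain ⟨t, ht, htc⟩ := step2 f hinj hloc qP (↑sy * bx - ↑sx * by') c c.2 (by ring_nf; rw [mul_comm] at hc ⊢; linear_combination hc)
      refine (IsLocalization.eq_iff_exists N _).mpr ⟨⟨f t, ⟨t, ht, rfl⟩⟩, ?_⟩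
      have : f t * (↑sy * bx - ↑sx * by') = 0 := htc
      linear_combination this
    have hsurj : Function.Surjective h1 := by
      intro y
      obtain ⟨x, hx⟩ := (hloc qP).2 (g1 y)
      refine ⟨x, hg1inj ?_⟩
      have := congrFun (congrArg (fun (r : _ →+* _) => (r : _ → _)) hcompeq) x
      simp only [RingHom.coe_comp, Function.comp_apply] at this
      rw [this, hx]
    -- express b/1 from A_p
    obtain ⟨x, hx⟩ := hsurj (algebraMap B (Localization N) b)
    obtain ⟨⟨a, s⟩, rfl⟩ := IsLocalization.mk'_surjective p.primeCompl x
    rw [hh1, IsLocalization.map_mk'] at hx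
    rw [← IsLocalization.mk'_one (M := N) (Localization N) b] at hx
    rw [IsLocalization.mk'_eq_iff_eq] at hx
    obtain ⟨c, hc⟩ := (IsLocalization.eq_iff_exists N _).mp hx
    obtain ⟨t, ht, htc⟩ := c.2
    rw [← htc] at hc
    simp only [OneMemClass.coe_one, one_mul] at hc
    -- hc : f t * f a = f t * (f s * b)  (roughly)
    have key : f (t * a) = f (t * ↑s) * b := by
      simp only [map_mul]
      calc f t * f a = f t * (f ↑s * b) := by
            have := hc
            simpa using this
        _ = f t * f ↑s * b := by ring
    have hmem : f (t * ↑s) * b ∈ J' := by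
      rw [← key]
      apply Ideal.mem_map_of_mem
      rw [Ideal.mem_comap, key]
      exact J.mul_mem_left _ hb
    have : f (t * ↑s) ∈ I := by
      rw [hI, Ideal.mem_colon_span_singleton]
      simpa using hmem
    have hts : t * ↑s ∈ p := hqI this
    have := ‹p.IsPrime›.mem_or_mem hts
    rcases this with h | h
    · exact ht h
    · exact s.2 h
  rw [hJ]
  exact Ideal.FG.map (IsNoetherian.noetherian (J.comap f)) f
end Alg2

open AlgebraicGeometry CategoryTheory

section SchemePart

/-- Affine case of the main theorem. -/
theorem keyAffine {W Z : Scheme} [IsAffine W] [IsAffine Z] (j : W ⟶ Z)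
    (hinjb : Function.Injective j.base) (hstalk : ∀ w : W, IsIso (j.stalkMap w))
    (hZ : IsNoetherianRing Γ(Z, ⊤)) : IsNoetherianRing Γ(W, ⊤) := by
  set φ := j.appTop with hφ
  have hspec : Spec.map φ = W.isoSpec.inv ≫ (j ≫ Z.isoSpec.hom) := by
    rw [← Scheme.isoSpec_hom_naturality, Iso.inv_hom_id_assoc]
  have hinj2 : Function.Injective (Spec.map φ).base := by
    rw [hspec]
    rw [show ⇑(W.isoSpec.inv ≫ j ≫ Z.isoSpec.hom) = ⇑Z.isoSpec.hom ∘ ⇑j ∘ ⇑W.isoSpec.inv from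
      funext fun x => by simp [Scheme.Hom.comp_apply]]
    refine Function.Injective.comp ?_ (Function.Injective.comp ?_ ?_)
    · exact (ConcreteCategory.bijective_of_isIso Z.isoSpec.hom.base).injective
    · exact hinjb
    · exact (ConcreteCategory.bijective_of_isIso W.isoSpec.inv.base).injective
  have hstalk2 : ∀ p : Spec Γ(W, ⊤), IsIso ((Spec.map φ).stalkMap p) := by
    intro p
    rw [hspec, Scheme.Hom.stalkMap_comp, Scheme.Hom.stalkMap_comp]
    have h1 := hstalk (W.isoSpec.inv p)
    have h2 : IsIso (Z.isoSpec.hom.stalkMap (j (W.isoSpec.inv p))) := inferInstance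
    have h3 : IsIso (W.isoSpec.inv.stalkMap p) := inferInstance
    exact IsIso.comp_isIso' (IsIso.comp_isIso' h2 h1) h3
  haveI : IsNoetherianRing (Γ(Z, ⊤) : Type _) := hZ
  have hloc : ∀ q : PrimeSpectrum Γ(W, ⊤), Function.Bijective
      (Localization.localRingHom (PrimeSpectrum.comap φ.hom q).asIdeal
        q.asIdeal φ.hom rfl) := by
    intro q
    have h3 := Scheme.localRingHom_comp_stalkIso φ q
    haveI : IsIso ((Spec.stalkIso Γ(Z,⊤) (PrimeSpectrum.comap φ.hom q)).hom ≫
        (CommRingCat.ofHom <| Localization.localRingHom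
          (PrimeSpectrum.comap φ.hom q).asIdeal q.asIdeal
          φ.hom rfl) ≫ (Spec.stalkIso Γ(W,⊤) q).inv) := by
      rw [h3]; exact hstalk2 q
    haveI : IsIso ((CommRingCat.ofHom <| Localization.localRingHom
          (PrimeSpectrum.comap φ.hom q).asIdeal q.asIdeal
          φ.hom rfl) ≫ (Spec.stalkIso Γ(W,⊤) q).inv) :=
      IsIso.of_isIso_comp_left (Spec.stalkIso Γ(Z,⊤) _).hom _
    haveI : IsIso (CommRingCat.ofHom <| Localization.localRingHom
          (PrimeSpectrum.comap φ.hom q).asIdeal q.asIdeal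
          φ.hom rfl) :=
      IsIso.of_isIso_comp_right _ (Spec.stalkIso Γ(W,⊤) q).inv
    exact (ConcreteCategory.bijective_of_isIso (C := CommRingCat)
      (CommRingCat.ofHom <| Localization.localRingHom
          (PrimeSpectrum.comap φ.hom q).asIdeal q.asIdeal
          φ.hom rfl))
  exact keyAlg φ.hom (by
      have : PrimeSpectrum.comap φ.hom = (Spec.map φ).base := rfl
      rw [this]; exact hinj2) hloc

end SchemePart


/-- Let `i : X ⟶ Y` be a pro-open immersion of quasi-compact schemes (i.e. `i`
is injective on the underlying topological spaces and induces isomorphisms on all local rings).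
If `Y` is a noetherian scheme, then `X` is a noetherian scheme. -/
theorem stmt_1 {X Y : Scheme} [CompactSpace X] [CompactSpace Y]
    (i : X ⟶ Y) (hinj : Function.Injective i.base)
    (hstalk : ∀ x : X, IsIso (i.stalkMap x))
    [AlgebraicGeometry.IsNoetherian Y] :
    AlgebraicGeometry.IsNoetherian X := by
  have hcov : ∀ x : X, ∃ U : X.affineOpens, x ∈ U.1 ∧ IsNoetherianRing Γ(X, U.1) := by
    intro x
    obtain ⟨_, ⟨V₀, hV₀, rfl⟩, hxV, -⟩ := (Y.isBasis_affineOpens).exists_subset_of_mem_open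
      (Set.mem_univ (i.base x)) isOpen_univ
    set V : Y.Opens := V₀ with hVdef
    have hV : IsAffineOpen V := hV₀
    obtain ⟨_, ⟨U₀, hU₀, rfl⟩, hxU, hUsub⟩ := (X.isBasis_affineOpens).exists_subset_of_mem_open
      (show x ∈ (i ⁻¹ᵁ V : X.Opens) from hxV) (i ⁻¹ᵁ V).2
    set U : X.Opens := U₀ with hUdef
    have hU : IsAffineOpen U := hU₀
    have e : U ≤ i ⁻¹ᵁ V := hUsub
    haveI : IsAffine U.toScheme := hU
    haveI : IsAffine V.toScheme := hV
    set j := i.resLE V U e with hj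
    have hcomp : j ≫ V.ι = U.ι ≫ i := Scheme.Hom.resLE_comp_ι i e
    have hjinj : Function.Injective j.base := by
      have hbase : ∀ w, V.ι.base (j.base w) = i.base (U.ι.base w) := by
        intro w
        have := congrArg (fun (m : U.toScheme ⟶ Y) => m.base w) hcomp
        simpa using this
      intro w w' hww
      apply (Scheme.Hom.isOpenEmbedding U.ι).injective
      apply hinj
      rw [← hbase, ← hbase, hww]
    have hjstalk : ∀ w : U.toScheme, IsIso (j.stalkMap w) := by
      intro w
      have h1 := Scheme.Hom.stalkMap_congr_hom _ _ hcomp w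
      rw [Scheme.Hom.stalkMap_comp, Scheme.Hom.stalkMap_comp] at h1
      have h2 := hstalk (U.ι w)
      haveI : IsIso (V.ι.stalkMap (j.base w) ≫ j.stalkMap w) := by
        rw [h1]; exact IsIso.comp_isIso' (Iso.isIso_hom _) (IsIso.comp_isIso' h2 inferInstance)
      exact IsIso.of_isIso_comp_left (V.ι.stalkMap (j.base w)) _
    have hVnoeth : IsNoetherianRing Γ(V.toScheme, ⊤) := by
      haveI : IsNoetherianRing Γ(Y, V) :=
        IsLocallyNoetherian.component_noetherian ⟨V, hV⟩
      exact isNoetherianRing_of_ringEquiv _ V.topIso.symm.commRingCatIsoToRingEquiv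
    haveI hUnoeth' : IsNoetherianRing Γ(U.toScheme, ⊤) := keyAffine j hjinj hjstalk hVnoeth
    have : IsNoetherianRing Γ(X, U) :=
      isNoetherianRing_of_ringEquiv _ U.topIso.commRingCatIsoToRingEquiv
    exact ⟨⟨U, hU⟩, hxU, this⟩
  choose S hS1 hS2 using hcov
  haveI : IsLocallyNoetherian X := by
    refine isLocallyNoetherian_of_affine_cover (S := S) ?_ hS2
    refine le_antisymm le_top ?_
    intro x _
    exact TopologicalSpace.Opens.mem_iSup.mpr ⟨x, hS1 x⟩
  exact { toIsLocallyNoetherian := inferInstance, toCompactSpace := inferInstance }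
end

section
/- Let i : X → 𝒳 be a pro-open immersion of integral noetherian schemes, and assume that 𝒳 is integrally closed in X, meaning that for every affine open subset W ⊆ 𝒳 the ring O_𝒳(W) is integrally closed in the ring O_X(i⁻¹(W)). Then for every point v ∈ 𝒳 that does not lie in the image of i and whose local ring O_{𝒳,v} has Krull dimension 1, the local ring O_{𝒳,v} is a discrete valuation ring. -/
open AlgebraicGeometry CategoryTheory Opposite

section StmtAux3

open TopologicalSpace

universe u

lemma aux_exists_specializes {X Y : Scheme.{u}} (f : X ⟶ Y)
    (hf : ∀ x, IsIso (f.stalkMap x)) {x : X} {w : Y} (hw : w ⤳ f.base x) :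
    ∃ x' : X, x' ⤳ x ∧ f.base x' = w := by
  haveI := hf x
  have hmem : w ∈ Set.range (Y.fromSpecStalk (f.base x)).base := by
    rw [Scheme.range_fromSpecStalk]; exact hw
  obtain ⟨p, hp⟩ := hmem
  haveI : IsIso (Spec.map (f.stalkMap x)) := inferInstance
  obtain ⟨q, hq⟩ := (Scheme.Hom.homeomorph (Spec.map (f.stalkMap x))).surjective p
  refine ⟨(X.fromSpecStalk x).base q, ?_, ?_⟩
  · have h2 : (X.fromSpecStalk x).base q ∈ Set.range (X.fromSpecStalk x).base := ⟨q, rfl⟩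
    rwa [Scheme.range_fromSpecStalk] at h2
  · have h := Scheme.SpecMap_stalkMap_fromSpecStalk (f := f) (x := x)
    have h3 : (X.fromSpecStalk x ≫ f).base q
        = (Spec.map (f.stalkMap x) ≫ Y.fromSpecStalk (f.base x)).base q := by
      rw [h]
    rw [Scheme.Hom.comp_apply, Scheme.Hom.comp_apply] at h3
    rw [h3, Scheme.Hom.homeomorph_apply] at *
    rw [hq, hp]

lemma aux_common_germ {Y : Scheme.{u}} (v : Y) {ι : Type} (s : Finset ι)
    (c : ι → Y.presheaf.stalk v) :
    ∃ (U : Y.Opens) (hU : v ∈ U) (r : ι → Γ(Y, U)),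
      ∀ j ∈ s, Y.presheaf.germ U v hU (r j) = c j := by
  classical
  induction s using Finset.induction_on with
  | empty => exact ⟨⊤, trivial, fun _ => 0, by simp⟩
  | @insert a s ha ih =>
      obtain ⟨U₁, hU₁, r₁, hr₁⟩ := ih
      obtain ⟨U₂, hU₂, s₂, hs₂⟩ := TopCat.Presheaf.germ_exist Y.presheaf (x := v) (c a)
      refine ⟨U₁ ⊓ U₂, (show v ∈ U₁ ⊓ U₂ from ⟨hU₁, hU₂⟩), fun j => if j = a
          then Y.presheaf.map (homOfLE (inf_le_right : U₁ ⊓ U₂ ≤ U₂)).op s₂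
          else Y.presheaf.map (homOfLE (inf_le_left : U₁ ⊓ U₂ ≤ U₁)).op (r₁ j), ?_⟩
      intro j hj
      rcases Finset.mem_insert.mp hj with rfl | hj'
      · beta_reduce
        rw [if_pos rfl, TopCat.Presheaf.germ_res_apply]
        exact hs₂
      · have hne : j ≠ a := fun h => ha (h ▸ hj')
        beta_reduce
        rw [if_neg hne, TopCat.Presheaf.germ_res_apply]
        exact hr₁ j hj'

lemma aux_genericPoint_mem {Y : Scheme.{u}} [IsIntegral Y] {V : Y.Opens} {x : Y}
    (hx : x ∈ V) : genericPoint Y ∈ V := by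
  have h1 : genericPoint Y ⤳ x := genericPoint_specializes x
  have h2 : x ∈ closure ({genericPoint Y} : Set Y) := h1.mem_closure
  obtain ⟨y, hyV, hy⟩ := mem_closure_iff.mp h2 V V.isOpen hx
  rwa [Set.mem_singleton_iff.mp hy] at hyV

lemma aux_glue {Y : Scheme.{u}} [IsIntegral Y] (U : Y.Opens) [Nonempty U]
    (t : Y.functionField)
    (h : ∀ x, x ∈ U → t ∈ Set.range (algebraMap (Y.presheaf.stalk x) Y.functionField)) :
    ∃ s : Γ(Y, U), Y.germToFunctionField U s = t := by
  classical
  have hchoice : ∀ x : U, ∃ (V : Y.Opens) (hxV : (x : Y) ∈ V) (hgV : genericPoint Y ∈ V)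
      (sec : Γ(Y, V)), V ≤ U ∧ Y.presheaf.germ V (genericPoint Y) hgV sec = t := by
    rintro ⟨x, hx⟩
    obtain ⟨u, hu⟩ := h x hx
    obtain ⟨V₀, hxV₀, s₀, hs₀⟩ := TopCat.Presheaf.germ_exist Y.presheaf (x := x) u
    have hgV : genericPoint Y ∈ V₀ ⊓ U := aux_genericPoint_mem (V := V₀ ⊓ U) (show x ∈ V₀ ⊓ U from ⟨hxV₀, hx⟩)
    refine ⟨V₀ ⊓ U, (show x ∈ V₀ ⊓ U from ⟨hxV₀, hx⟩), hgV,
      Y.presheaf.map (homOfLE (inf_le_left : V₀ ⊓ U ≤ V₀)).op s₀, inf_le_right, ?_⟩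
    have h1 : Y.presheaf.germ (V₀ ⊓ U) x (show x ∈ V₀ ⊓ U from ⟨hxV₀, hx⟩)
        (Y.presheaf.map (homOfLE (inf_le_left : V₀ ⊓ U ≤ V₀)).op s₀) = u := by
      rw [TopCat.Presheaf.germ_res_apply]; exact hs₀
    have h2 := TopCat.Presheaf.germ_stalkSpecializes_apply (C := CommRingCat) Y.presheaf
      (U := V₀ ⊓ U) (y := x) (show x ∈ V₀ ⊓ U from ⟨hxV₀, hx⟩) (genericPoint_specializes x)
      (Y.presheaf.map (homOfLE (inf_le_left : V₀ ⊓ U ≤ V₀)).op s₀)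
    rw [h1] at h2
    refine h2.symm.trans ?_
    rw [← hu]
    rfl
  choose V hxV hgV sec hVU hsec using hchoice
  have hcover : U ≤ iSup V := by
    intro x hx
    exact Opens.mem_iSup.mpr ⟨⟨x, hx⟩, hxV ⟨x, hx⟩⟩
  have hcompat : TopCat.Presheaf.IsCompatible Y.sheaf.1 V sec := by
    intro x y
    haveI : Nonempty ((V x ⊓ V y : Y.Opens)) := ⟨⟨genericPoint Y, ⟨hgV x, hgV y⟩⟩⟩
    apply germ_injective_of_isIntegral Y (U := V x ⊓ V y) (genericPoint Y)
      (show genericPoint Y ∈ V x ⊓ V y from ⟨hgV x, hgV y⟩)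
    show Y.presheaf.germ _ _ _ (Y.presheaf.map (Opens.infLELeft (V x) (V y)).op (sec x)) =
      Y.presheaf.germ _ _ _ (Y.presheaf.map (Opens.infLERight (V x) (V y)).op (sec y))
    rw [TopCat.Presheaf.germ_res_apply, TopCat.Presheaf.germ_res_apply]
    rw [hsec x, hsec y]
  obtain ⟨s, hs, -⟩ := Y.sheaf.existsUnique_gluing' V U (fun x => homOfLE (hVU x)) hcover sec hcompat
  obtain ⟨⟨x₀', hx₀'⟩⟩ := ‹Nonempty U›
  let x₀ : U := ⟨x₀', hx₀'⟩
  refine ⟨s, ?_⟩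
  have h3 : Y.presheaf.germ (V x₀) (genericPoint Y) (hgV x₀)
      (Y.presheaf.map (homOfLE (hVU x₀)).op s) = Y.germToFunctionField U s := by
    exact TopCat.Presheaf.germ_res_apply _ _ _ _ _
  rw [← h3, show (Y.presheaf.map (homOfLE (hVU x₀)).op) s = sec x₀ from hs x₀, hsec x₀]


end StmtAux3

/-- Let `i : X ⟶ 𝒳` be a pro-open immersion of integral noetherian schemes
(injective on points, isomorphisms on local rings), and assume `𝒳` is integrally closed in `X`:
for every affine open `W ⊆ 𝒳`, every element of `O_X(i⁻¹ W)` integral over `O_𝒳(W)` lies in the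
image of `O_𝒳(W) → O_X(i⁻¹ W)`.  Then for every point `v ∈ 𝒳` not in the image of `i` whose
local ring has Krull dimension `1`, the local ring `O_{𝒳,v}` is a discrete valuation ring. -/
theorem stmt_3 {X 𝒳 : Scheme} [AlgebraicGeometry.IsIntegral X] [AlgebraicGeometry.IsIntegral 𝒳]
    [AlgebraicGeometry.IsNoetherian X] [AlgebraicGeometry.IsNoetherian 𝒳]
    (i : X ⟶ 𝒳) (hinj : Function.Injective i.base)
    (hstalk : ∀ x : X, IsIso (i.stalkMap x))
    (hic : ∀ W : 𝒳.Opens, IsAffineOpen W →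
      ∀ b : Γ(X, i ⁻¹ᵁ W), RingHom.IsIntegralElem (i.app W).hom b → b ∈ Set.range (i.app W))
    (v : 𝒳) (hv : v ∉ Set.range i.base)
    (hdim : ringKrullDim (𝒳.presheaf.stalk v) = 1) :
    ∃ _ : IsDomain (𝒳.presheaf.stalk v), IsDiscreteValuationRing (𝒳.presheaf.stalk v) := by
  classical
  obtain ⟨_, ⟨W₀, hW₀a, rfl⟩, hvW₀, -⟩ :=
    𝒳.isBasis_affineOpens.exists_subset_of_mem_open (Set.mem_univ v) isOpen_univ
  haveI : Nonempty W₀ := ⟨⟨v, hvW₀⟩⟩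
  haveI hDom : IsDomain (𝒳.presheaf.stalk v) := by
    have hinj2 : Function.Injective (algebraMap (𝒳.presheaf.stalk v) 𝒳.functionField) :=
      IsLocalization.injective _ (le_refl (nonZeroDivisors (𝒳.presheaf.stalk v)))
    exact hinj2.isDomain (algebraMap (𝒳.presheaf.stalk v) 𝒳.functionField)
  haveI hNoeth : IsNoetherianRing (𝒳.presheaf.stalk v) := by
    haveI : IsNoetherianRing Γ(𝒳, W₀) :=
      IsLocallyNoetherian.component_noetherian ⟨W₀, hW₀a⟩
    letI := 𝒳.presheaf.algebra_section_stalk (⟨v, hvW₀⟩ : W₀)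
    haveI := hW₀a.isLocalization_stalk ⟨v, hvW₀⟩
    exact IsLocalization.isNoetherianRing
      (hW₀a.primeIdealOf ⟨v, hvW₀⟩).asIdeal.primeCompl (𝒳.presheaf.stalk v) inferInstance
  have hnf : ¬ IsField (𝒳.presheaf.stalk v) := by
    intro hf
    rw [ringKrullDim_eq_zero_of_isField hf] at hdim
    exact absurd hdim (by decide)
  have hprime : ∀ p : Ideal (𝒳.presheaf.stalk v), p.IsPrime →
      p = ⊥ ∨ p = IsLocalRing.maximalIdeal (𝒳.presheaf.stalk v) := by
    intro p hp
    by_contra hc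
    push_neg at hc
    obtain ⟨h1, h2⟩ := hc
    have hbot : (⊥ : Ideal (𝒳.presheaf.stalk v)).IsPrime := Ideal.bot_prime
    have hlen : ((2 : ℕ) : WithBot ℕ∞) ≤
        Order.krullDim (PrimeSpectrum (𝒳.presheaf.stalk v)) :=
      Order.LTSeries.length_le_krullDim
      ⟨2, ![⟨⊥, hbot⟩, ⟨p, hp⟩, ⟨IsLocalRing.maximalIdeal _, inferInstance⟩], by
        intro j
        fin_cases j
        · show (⟨⊥, hbot⟩ : PrimeSpectrum _) < ⟨p, hp⟩
          refine lt_of_le_of_ne (show (⊥ : Ideal _) ≤ p from bot_le) ?_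
          intro hle
          exact h1 (congrArg PrimeSpectrum.asIdeal hle).symm
        · show (⟨p, hp⟩ : PrimeSpectrum _) < ⟨IsLocalRing.maximalIdeal _, inferInstance⟩
          refine lt_of_le_of_ne (IsLocalRing.le_maximalIdeal hp.ne_top) ?_
          intro hle
          exact h2 (congrArg PrimeSpectrum.asIdeal hle)⟩
    rw [show Order.krullDim (PrimeSpectrum (𝒳.presheaf.stalk v)) =
      ringKrullDim (𝒳.presheaf.stalk v) from rfl, hdim] at hlen
    have : ¬ ((2 : ℕ) : WithBot ℕ∞) ≤ 1 := by
      rw [show ((2 : ℕ) : WithBot ℕ∞) = ((2 : ℕ∞) : WithBot ℕ∞) from rfl]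
      rw [show (1 : WithBot ℕ∞) = ((1 : ℕ∞) : WithBot ℕ∞) from rfl]
      rw [WithBot.coe_le_coe]
      norm_num
    exact absurd hlen this
  have hIC : IsIntegrallyClosed (𝒳.presheaf.stalk v) := by
    classical
    rw [isIntegrallyClosed_iff 𝒳.functionField]
    intro t ht
    -- generic point facts
    have hgen : i.base (genericPoint X) = genericPoint 𝒳 := by
      obtain ⟨x', hx', he⟩ := aux_exists_specializes i hstalk
        (x := genericPoint X) (w := genericPoint 𝒳) (genericPoint_specializes _)
      have hx'eq : x' = genericPoint X := (hx'.antisymm (genericPoint_specializes x')).eq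
      rwa [hx'eq] at he
    have hcl : ∀ x : X, ¬ v ⤳ i.base x := by
      intro x hvx
      obtain ⟨x', -, he⟩ := aux_exists_specializes i hstalk hvx
      exact hv ⟨x', he⟩
    obtain ⟨p, hpm, hpe⟩ := ht
    -- spread out the coefficients
    obtain ⟨U₁, hvU₁, r₁, hr₁⟩ := aux_common_germ v (Finset.range p.natDegree)
      (fun j => p.coeff j)
    obtain ⟨_, ⟨W, hWa, rfl⟩, hvW, hWU₁⟩ :=
      𝒳.isBasis_affineOpens.exists_subset_of_mem_open hvU₁ U₁.isOpen
    haveI : Nonempty W := ⟨⟨v, hvW⟩⟩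
    set r : ℕ → Γ(𝒳, W) :=
      fun j => 𝒳.presheaf.map (homOfLE (show W ≤ U₁ from hWU₁)).op (r₁ j) with hrdef
    have hφr : ∀ j ∈ Finset.range p.natDegree, 𝒳.germToFunctionField W (r j)
        = algebraMap (𝒳.presheaf.stalk v) 𝒳.functionField (p.coeff j) := by
      intro j hj
      have h1 : 𝒳.presheaf.germ W v hvW (r j) = p.coeff j := by
        rw [hrdef]
        beta_reduce
        rw [TopCat.Presheaf.germ_res_apply]
        exact hr₁ j hj
      have h2 := TopCat.Presheaf.germ_stalkSpecializes_apply (C := CommRingCat) 𝒳.presheaf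
        (U := W) (y := v) hvW ((genericPoint_spec 𝒳).specializes trivial) (r j)
      rw [h1] at h2
      exact h2.symm
    have heq : t ^ p.natDegree
        + ∑ j ∈ Finset.range p.natDegree, 𝒳.germToFunctionField W (r j) * t ^ j = 0 := by
      have h0 := hpe
      rw [Polynomial.eval₂_eq_sum_range, Finset.sum_range_succ, hpm.coeff_natDegree,
        map_one, one_mul, add_comm] at h0
      refine Eq.trans ?_ h0
      congr 1
      refine Finset.sum_congr rfl ?_
      intro j hj
      rw [hφr j hj]
    -- the pole set
    set P : Set 𝒳 := {w | w ∈ W ∧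
      t ∉ Set.range (algebraMap (𝒳.presheaf.stalk w) 𝒳.functionField)} with hPdef
    have hopen : ∀ w ∈ W, w ∉ P → ∃ V : 𝒳.Opens, w ∈ V ∧
        ∀ w' ∈ V, t ∈ Set.range (algebraMap (𝒳.presheaf.stalk w') 𝒳.functionField) := by
      intro w hw hwP
      have hrange : t ∈ Set.range (algebraMap (𝒳.presheaf.stalk w) 𝒳.functionField) := by
        by_contra hcon; exact hwP ⟨hw, hcon⟩
      obtain ⟨u, hu⟩ := hrange
      letI := 𝒳.presheaf.algebra_section_stalk (⟨w, hw⟩ : W)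
      haveI := hWa.isLocalization_stalk ⟨w, hw⟩
      haveI := functionField_isScalarTower 𝒳 W ⟨w, hw⟩
      obtain ⟨⟨a, s⟩, hsurj⟩ := IsLocalization.surj
        (hWa.primeIdealOf ⟨w, hw⟩).asIdeal.primeCompl u
      have hts : t * algebraMap Γ(𝒳, W) 𝒳.functionField s.1
          = algebraMap Γ(𝒳, W) 𝒳.functionField a := by
        have h4 := congrArg (algebraMap (𝒳.presheaf.stalk w) 𝒳.functionField) hsurj
        rw [map_mul, hu, ← IsScalarTower.algebraMap_apply, ← IsScalarTower.algebraMap_apply] at h4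
        exact h4
      refine ⟨𝒳.basicOpen s.1, ?_, ?_⟩
      · rw [Scheme.mem_basicOpen 𝒳 s.1 w hw]
        exact (IsLocalization.AtPrime.isUnit_to_map_iff (𝒳.presheaf.stalk w)
          (hWa.primeIdealOf ⟨w, hw⟩).asIdeal s.1).mpr s.2
      · intro w' hw'
        have hw'W : w' ∈ W := 𝒳.basicOpen_le s.1 hw'
        have hunit : IsUnit (𝒳.presheaf.germ W w' hw'W s.1) :=
          (𝒳.mem_basicOpen s.1 w' hw'W).mp hw'
        have hcomm : ∀ bb : Γ(𝒳, W), algebraMap (𝒳.presheaf.stalk w') 𝒳.functionField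
            (𝒳.presheaf.germ W w' hw'W bb) = algebraMap Γ(𝒳, W) 𝒳.functionField bb := by
          intro bb
          exact TopCat.Presheaf.germ_stalkSpecializes_apply (C := CommRingCat) 𝒳.presheaf
            (U := W) (y := w') hw'W ((genericPoint_spec 𝒳).specializes trivial) bb
        refine ⟨𝒳.presheaf.germ W w' hw'W a * ↑hunit.unit⁻¹, ?_⟩
        rw [map_mul, hcomm a, ← hts]
        have h5 : algebraMap Γ(𝒳, W) 𝒳.functionField s.1
            = algebraMap (𝒳.presheaf.stalk w') 𝒳.functionField ↑hunit.unit := by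
          rw [IsUnit.unit_spec]
          exact (hcomm s.1).symm
        rw [mul_assoc, h5, ← map_mul, Units.mul_inv, map_one, mul_one]
    have hclosed : ∀ c, c ∈ closure P → c ∈ W → c ∈ P := by
      intro c hcP hcW
      by_contra hcontra
      obtain ⟨V, hcV, hV⟩ := hopen c hcW hcontra
      obtain ⟨y, hyV, hyP⟩ := mem_closure_iff.mp hcP V V.isOpen hcV
      exact hyP.2 (hV y hyV)
    have hkey : ∀ c, c ⤳ v → c ∈ P → c = v := by
      intro c hcv hcP
      have hpc : (Ideal.comap (𝒳.presheaf.stalkSpecializes hcv).hom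
          (IsLocalRing.maximalIdeal (𝒳.presheaf.stalk c))).IsPrime := inferInstance
      rcases hprime _ hpc with hbot | hmax
      · exfalso
        apply hcP.2
        obtain ⟨⟨a, b⟩, hab⟩ := IsLocalization.surj
          (nonZeroDivisors (𝒳.presheaf.stalk v)) (S := 𝒳.functionField) t
        have hbu : IsUnit (𝒳.presheaf.stalkSpecializes hcv b.1) := by
          by_contra hnu
          have hmem : b.1 ∈ Ideal.comap (𝒳.presheaf.stalkSpecializes hcv).hom
              (IsLocalRing.maximalIdeal (𝒳.presheaf.stalk c)) := by
            rw [Ideal.mem_comap]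
            exact (IsLocalRing.mem_maximalIdeal _).mpr hnu
          rw [hbot, Ideal.mem_bot] at hmem
          exact nonZeroDivisors.ne_zero b.2 hmem
        have hcomp : ∀ z, algebraMap (𝒳.presheaf.stalk c) 𝒳.functionField
            (𝒳.presheaf.stalkSpecializes hcv z)
            = algebraMap (𝒳.presheaf.stalk v) 𝒳.functionField z := by
          intro z
          exact TopCat.Presheaf.stalkSpecializes_comp_apply 𝒳.presheaf
            ((genericPoint_spec 𝒳).specializes trivial) hcv z
        refine ⟨𝒳.presheaf.stalkSpecializes hcv a * ↑hbu.unit⁻¹, ?_⟩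
        rw [map_mul, hcomp a, ← hab]
        have h6 : algebraMap (𝒳.presheaf.stalk v) 𝒳.functionField b.1
            = algebraMap (𝒳.presheaf.stalk c) 𝒳.functionField ↑hbu.unit := by
          rw [IsUnit.unit_spec]
          exact (hcomp b.1).symm
        rw [mul_assoc, h6, ← map_mul, Units.mul_inv, map_one, mul_one]
      · have h7 := Scheme.SpecMap_stalkSpecializes_fromSpecStalk (X := 𝒳) hcv
        have h8 : (Spec.map (𝒳.presheaf.stalkSpecializes hcv) ≫ 𝒳.fromSpecStalk v).base
            (IsLocalRing.closedPoint (𝒳.presheaf.stalk c))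
            = (𝒳.fromSpecStalk c).base (IsLocalRing.closedPoint (𝒳.presheaf.stalk c)) := by
          rw [h7]
        replace h8 : (𝒳.fromSpecStalk v).base ((Spec.map (𝒳.presheaf.stalkSpecializes hcv)).base
            (IsLocalRing.closedPoint (𝒳.presheaf.stalk c)))
            = (𝒳.fromSpecStalk c).base (IsLocalRing.closedPoint (𝒳.presheaf.stalk c)) := h8
        have h9 : (Spec.map (𝒳.presheaf.stalkSpecializes hcv)).base
            (IsLocalRing.closedPoint (𝒳.presheaf.stalk c))
            = IsLocalRing.closedPoint (𝒳.presheaf.stalk v) := by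
          rw [Spec.map_base]
          apply PrimeSpectrum.ext
          exact hmax
        rw [h9, Scheme.fromSpecStalk_closedPoint, Scheme.fromSpecStalk_closedPoint] at h8
        exact h8.symm
    -- decompose the closure of P into irreducible components
    obtain ⟨S, hSfin, hScl, hSirr, hSun⟩ :=
      TopologicalSpace.NoetherianSpace.exists_finite_set_isClosed_irreducible
        (isClosed_closure (s := P))
    have hGclosed : IsClosed (⋃₀ {C ∈ S | v ∉ C}) := by
      rw [Set.sUnion_eq_biUnion]
      apply Set.Finite.isClosed_biUnion (hSfin.subset (fun C hC => hC.1))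
      exact fun C hC => hScl C hC.1
    have hvG : v ∉ ⋃₀ {C ∈ S | v ∉ C} := by
      rintro ⟨C, hC, hvC⟩
      exact hC.2 hvC
    obtain ⟨_, ⟨W', hW'a, rfl⟩, hvW', hW'sub⟩ :=
      𝒳.isBasis_affineOpens.exists_subset_of_mem_open
        (show v ∈ (↑W ∩ (⋃₀ {C ∈ S | v ∉ C})ᶜ : Set 𝒳) from ⟨hvW, hvG⟩)
        (IsOpen.inter W.isOpen hGclosed.isOpen_compl)
    haveI : Nonempty W' := ⟨⟨v, hvW'⟩⟩
    have hW'W : (W' : Set 𝒳) ⊆ (W : Set 𝒳) := fun z hz => (hW'sub hz).1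
    have hPW' : ∀ w, w ∈ (W' : Set 𝒳) → w ∈ P → v ⤳ w := by
      intro w hwW' hwP
      have hwcl : w ∈ ⋃₀ S := by rw [← hSun]; exact subset_closure hwP
      obtain ⟨C, hCS, hwC⟩ := hwcl
      have hvC : v ∈ C := by
        by_contra hvC
        exact (hW'sub hwW').2 ⟨C, ⟨hCS, hvC⟩, hwC⟩
      have hCirr := hSirr C hCS
      have hgp : IsGenericPoint hCirr.genericPoint C :=
        hCirr.isGenericPoint_genericPoint (hScl C hCS)
      have hcv : hCirr.genericPoint ⤳ v := hgp.specializes hvC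
      have hcW : hCirr.genericPoint ∈ W := by
        have h2 : v ∈ closure ({hCirr.genericPoint} : Set 𝒳) := hcv.mem_closure
        obtain ⟨y, hyW, hy⟩ := mem_closure_iff.mp h2 W W.isOpen hvW
        rwa [Set.mem_singleton_iff.mp hy] at hyW
      have hcclP : hCirr.genericPoint ∈ closure P := by
        rw [hSun]
        exact Set.subset_sUnion_of_mem hCS hgp.mem
      have hcP : hCirr.genericPoint ∈ P := hclosed _ hcclP hcW
      have hceq : hCirr.genericPoint = v := hkey _ hcv hcP
      have hwcv : w ∈ closure ({v} : Set 𝒳) := by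
        rw [← hceq, hgp.def]
        exact hwC
      exact specializes_iff_mem_closure.mpr hwcv
    -- move to X
    have hξW' : i.base (genericPoint X) ∈ W' := by
      rw [hgen]; exact aux_genericPoint_mem hvW'
    have hξpre : genericPoint X ∈ i ⁻¹ᵁ W' := hξW'
    haveI : Nonempty (i ⁻¹ᵁ W') := ⟨⟨genericPoint X, hξpre⟩⟩
    haveI := hstalk (genericPoint X)
    set d : 𝒳.functionField ⟶ 𝒳.presheaf.stalk (i.base (genericPoint X)) :=
      𝒳.presheaf.stalkSpecializes (specializes_of_eq hgen) with hd
    set eKX : 𝒳.functionField ⟶ X.functionField := d ≫ i.stalkMap (genericPoint X) with heKXdef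
    have heKXinj : Function.Injective eKX := RingHom.injective eKX.hom
    have happ : ∀ a : Γ(𝒳, W'), X.germToFunctionField (i ⁻¹ᵁ W') (i.app W' a)
        = eKX (𝒳.germToFunctionField W' a) := by
      intro a
      have h1 : i.stalkMap (genericPoint X)
          (𝒳.presheaf.germ W' (i.base (genericPoint X)) hξW' a)
          = X.presheaf.germ (i ⁻¹ᵁ W') (genericPoint X) hξpre (i.app W' a) :=
        Scheme.Hom.germ_stalkMap_apply i W' (genericPoint X) hξW' a
      have h2 : d (𝒳.germToFunctionField W' a)
          = 𝒳.presheaf.germ W' (i.base (genericPoint X)) hξW' a :=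
        TopCat.Presheaf.germ_stalkSpecializes_apply (C := CommRingCat) 𝒳.presheaf
          (U := W') (y := genericPoint 𝒳) _ (specializes_of_eq hgen) a
      show X.presheaf.germ (i ⁻¹ᵁ W') (genericPoint X) hξpre (i.app W' a)
        = i.stalkMap (genericPoint X) (d (𝒳.germToFunctionField W' a))
      rw [h2, h1]
    have htrans : ∀ x, x ∈ (i ⁻¹ᵁ W') →
        eKX t ∈ Set.range (algebraMap (X.presheaf.stalk x) X.functionField) := by
      intro x hx
      have hixW : i.base x ∈ W := hW'W hx
      have hnP : i.base x ∉ P := fun hP => hcl x (hPW' _ hx hP)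
      have hr : t ∈ Set.range (algebraMap (𝒳.presheaf.stalk (i.base x)) 𝒳.functionField) := by
        by_contra hcon; exact hnP ⟨hixW, hcon⟩
      obtain ⟨u, hu⟩ := hr
      refine ⟨i.stalkMap x u, ?_⟩
      have h1 := Scheme.Hom.stalkSpecializes_stalkMap_apply i (genericPoint X) x
        (genericPoint_specializes x) u
      have h2 : d (algebraMap (𝒳.presheaf.stalk (i.base x)) 𝒳.functionField u)
          = 𝒳.presheaf.stalkSpecializes (i.base.hom.map_specializes (genericPoint_specializes x)) u :=
        TopCat.Presheaf.stalkSpecializes_comp_apply 𝒳.presheaf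
          (specializes_of_eq hgen) ((genericPoint_spec 𝒳).specializes trivial) u
      show X.presheaf.stalkSpecializes (genericPoint_specializes x) (i.stalkMap x u) = eKX t
      rw [← hu]
      show X.presheaf.stalkSpecializes (genericPoint_specializes x) (i.stalkMap x u)
        = i.stalkMap (genericPoint X) (d (algebraMap _ _ u))
      rw [h2, h1]
    obtain ⟨b, hb⟩ := aux_glue (i ⁻¹ᵁ W') (eKX t) htrans
    -- integral equation for b
    set q : Polynomial Γ(𝒳, W') := Polynomial.X ^ p.natDegree
      + ∑ j ∈ Finset.range p.natDegree, Polynomial.monomial j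
          (𝒳.presheaf.map (homOfLE (show W' ≤ W from hW'W)).op (r j)) with hqdef
    have hqm : q.Monic := by
      apply Polynomial.monic_X_pow_add
      apply lt_of_le_of_lt (Polynomial.degree_sum_le _ _)
      rw [Finset.sup_lt_iff (show (⊥ : WithBot ℕ) < (p.natDegree : WithBot ℕ) from
        WithBot.bot_lt_coe _)]
      intro j hj
      apply lt_of_le_of_lt (Polynomial.degree_monomial_le j _)
      exact_mod_cast Finset.mem_range.mp hj
    have hres : ∀ j ∈ Finset.range p.natDegree,
        X.germToFunctionField (i ⁻¹ᵁ W')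
          (i.app W' (𝒳.presheaf.map (homOfLE (show W' ≤ W from hW'W)).op (r j)))
        = eKX (𝒳.germToFunctionField W (r j)) := by
      intro j hj
      rw [happ]
      congr 1
      exact TopCat.Presheaf.germ_res_apply 𝒳.presheaf
        (homOfLE (show W' ≤ W from hW'W)) (genericPoint 𝒳) _ (r j)
    have hqe : Polynomial.eval₂ (i.app W').hom b q = 0 := by
      apply germ_injective_of_isIntegral X (U := i ⁻¹ᵁ W') (genericPoint X) hξpre
      rw [map_zero]
      show X.germToFunctionField (i ⁻¹ᵁ W') (Polynomial.eval₂ (i.app W').hom b q) = 0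
      rw [Polynomial.hom_eval₂]
      rw [hqdef, Polynomial.eval₂_add, Polynomial.eval₂_X_pow, Polynomial.eval₂_finset_sum]
      simp only [Polynomial.eval₂_monomial, RingHom.coe_comp, Function.comp_apply]
      have hbt : (X.germToFunctionField (i ⁻¹ᵁ W')) b = eKX t := hb
      rw [hbt]
      have hsum : ∀ j ∈ Finset.range p.natDegree,
          (X.germToFunctionField (i ⁻¹ᵁ W'))
            ((i.app W') (𝒳.presheaf.map (homOfLE (show W' ≤ W from hW'W)).op (r j)))
            * eKX t ^ j
          = eKX (𝒳.germToFunctionField W (r j) * t ^ j) := by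
        intro j hj
        rw [hres j hj, map_mul, map_pow]
      rw [Finset.sum_congr rfl hsum]
      rw [← map_pow, ← map_sum, ← map_add, heq, map_zero]
    obtain ⟨a, ha⟩ := hic W' hW'a b ⟨q, hqm, hqe⟩
    refine ⟨𝒳.presheaf.germ W' v hvW' a, ?_⟩
    apply heKXinj
    have h10 : algebraMap (𝒳.presheaf.stalk v) 𝒳.functionField (𝒳.presheaf.germ W' v hvW' a)
        = 𝒳.germToFunctionField W' a :=
      TopCat.Presheaf.germ_stalkSpecializes_apply (C := CommRingCat) 𝒳.presheaf
        (U := W') (y := v) hvW' ((genericPoint_spec 𝒳).specializes trivial) a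
    rw [h10, ← happ a, ha]
    exact hb
  have hm_ne : IsLocalRing.maximalIdeal (𝒳.presheaf.stalk v) ≠ ⊥ := by
    intro h
    exact hnf (IsLocalRing.isField_iff_maximalIdeal_eq.mpr h)
  haveI hdvr : IsDiscreteValuationRing (𝒳.presheaf.stalk v) := by
    refine ((IsDiscreteValuationRing.TFAE (𝒳.presheaf.stalk v) hnf).out 0 3).mpr ?_
    refine ⟨hIC, IsLocalRing.maximalIdeal _, ⟨hm_ne, inferInstance⟩, ?_⟩
    rintro q ⟨hq1, hq2⟩
    exact (hprime q hq2).resolve_left hq1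
  exact ⟨hDom, hdvr⟩
end

section
/- Let O be a discrete valuation ring with maximal ideal m and normalized additive valuation ord : O∖{0} → ℕ (so ord of a uniformizer is 1). Let e ≥ 0, let R = O[[x₂,…,x_{e+1}]] be the ring of formal power series in e variables over O, and let A = R[[x₁]]. For a ∈ R define v(a) ∈ ℕ ∪ {∞} as the infimum of ord over all coefficients of a (so v(a) = ∞ if and only if a = 0). Fix real numbers 0 < r < 1 and t > 0, and for f = Σ_{n≥0} a_n x₁ⁿ ∈ A define |f|_{t,r} := sup_{n≥0} exp(−t·v(a_n))·rⁿ, with the convention exp(−t·∞) := 0. Then: (i) |·|_{t,r} is a multiplicative non-archimedean norm on A, i.e., |f|_{t,r} = 0 if and only if f = 0, |1|_{t,r} = 1, |fg|_{t,r} = |f|_{t,r}·|g|_{t,r} and |f+g|_{t,r} ≤ max(|f|_{t,r}, |g|_{t,r}) for all f, g ∈ A; (ii) if f ∈ A satisfies v(a_n) = 0 for some n (equivalently, the reduction of f modulo m is nonzero), then for fixed r, lim_{t→∞} |f|_{t,r} = r^{n₀}, where n₀ = min{n : v(a_n) = 0}. -/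
open Filter

/-- For `a` in the multivariable formal power series ring `R = O[[x₂,…,x_{e+1}]]` over `O`,
the infimum `v(a)` of `ord` over all coefficients of `a` (so `v a = ∞` iff `a = 0`). -/
noncomputable def coeffOrd {O : Type*} [CommRing O] (ord : O → ℕ∞) (e : ℕ)
    (a : MvPowerSeries (Fin e) O) : ℕ∞ :=
  ⨅ d : Fin e →₀ ℕ, ord (MvPowerSeries.coeff d a)

/-- `exp (-t·m)` for `m : ℕ∞`, with the convention `exp (-t·∞) = 0`. -/
noncomputable def expNegMul (t : ℝ) (m : ℕ∞) : ℝ :=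
  if m = ⊤ then 0 else Real.exp (-t * (ENat.toNat m : ℝ))

/-- The Gauss norm `|f|_{t,r} = sup_n exp(-t·v(aₙ))·rⁿ` of
`f = Σ aₙ x₁ⁿ ∈ A = R[[x₁]]`, `R = O[[x₂,…,x_{e+1}]]`. -/
noncomputable def gaussNorm {O : Type*} [CommRing O] (ord : O → ℕ∞) (e : ℕ) (t r : ℝ)
    (f : PowerSeries (MvPowerSeries (Fin e) O)) : ℝ :=
  ⨆ n : ℕ, expNegMul t (coeffOrd ord e (PowerSeries.coeff (R := MvPowerSeries (Fin e) O) n f)) * r ^ n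

set_option linter.unusedSectionVars false


set_option linter.unusedSectionVars false

section OrdLemmas
variable {O : Type*} [CommRing O] [IsDomain O] [IsDiscreteValuationRing O]
  {ord : O → ℕ∞}
  (hord_top : ∀ a : O, ord a = ⊤ ↔ a = 0)
  (hord_mul : ∀ a b : O, ord (a * b) = ord a + ord b)
  (hord_unif : ∀ π : O, Irreducible π → ord π = 1)

include hord_top in
lemma ord_zero' : ord 0 = ⊤ := (hord_top 0).mpr rfl

include hord_top hord_mul in
lemma ord_one' : ord (1 : O) = 0 := by
  have h := hord_mul 1 1
  rw [mul_one] at h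
  have hne : ord (1 : O) ≠ ⊤ := by
    simp only [ne_eq, hord_top]; exact one_ne_zero
  lift ord (1 : O) to ℕ using hne with n hn
  rw [← Nat.cast_add, Nat.cast_inj] at h
  norm_cast
  omega

include hord_top hord_mul in
lemma ord_unit' (u : Oˣ) : ord (u : O) = 0 := by
  have h := hord_mul (u : O) (↑u⁻¹ : O)
  rw [Units.mul_inv, ord_one' hord_top hord_mul] at h
  exact (add_eq_zero.mp h.symm).1

include hord_top hord_mul in
lemma ord_neg' (a : O) : ord (-a) = ord a := by
  have : ((-1 : Oˣ) : O) = (-1 : O) := by simp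
  have h := hord_mul (-1) a
  rw [neg_one_mul, ← this, ord_unit' hord_top hord_mul, zero_add] at h
  exact h

include hord_top hord_mul hord_unif in
lemma ord_pow' {π : O} (hπ : Irreducible π) (k : ℕ) : ord (π ^ k) = (k : ℕ∞) := by
  induction k with
  | zero => simpa using ord_one' hord_top hord_mul
  | succ n ih =>
      rw [pow_succ, hord_mul, ih, hord_unif π hπ]
      push_cast; ring

include hord_top hord_mul hord_unif in
lemma ord_pow_mul' {π : O} (hπ : Irreducible π) (k : ℕ) (c : O) :
    ord (π ^ k * c) = (k : ℕ∞) + ord c := by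
  rw [hord_mul, ord_pow' hord_top hord_mul hord_unif hπ]

include hord_top hord_mul hord_unif in
lemma ord_unit_pow' {π : O} (hπ : Irreducible π) (k : ℕ) (u : Oˣ) :
    ord ((u : O) * π ^ k) = (k : ℕ∞) := by
  rw [hord_mul, ord_unit' hord_top hord_mul, ord_pow' hord_top hord_mul hord_unif hπ, zero_add]

include hord_top hord_mul hord_unif in
lemma ord_pow_dvd_iff' {π : O} (hπ : Irreducible π) (k : ℕ) (a : O) :
    π ^ k ∣ a ↔ (k : ℕ∞) ≤ ord a := by
  rcases eq_or_ne a 0 with rfl | ha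
  · simp [ord_zero' hord_top]
  · obtain ⟨n, u, rfl⟩ := IsDiscreteValuationRing.eq_unit_mul_pow_irreducible ha hπ
    rw [ord_unit_pow' hord_top hord_mul hord_unif hπ, Nat.cast_le]
    constructor
    · intro hdvd
      by_contra hlt
      push_neg at hlt
      have h2 : π ^ n * π ∣ π ^ n := by
        rw [← pow_succ]
        have : π ^ k ∣ π ^ n := (Units.dvd_mul_left).mp hdvd
        exact dvd_trans (pow_dvd_pow π (by omega)) this
      obtain ⟨c, hc⟩ := h2
      have hπn : π ^ n ≠ 0 := pow_ne_zero n hπ.ne_zero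
      have h1 : (1 : O) = π * c := by
        apply mul_left_cancel₀ hπn
        rw [mul_one]
        nth_rewrite 1 [hc]
        ring
      exact hπ.not_isUnit (IsUnit.of_mul_eq_one (b := c) h1.symm)
    · intro hkn
      exact Dvd.dvd.mul_left (pow_dvd_pow π hkn) _

include hord_top hord_mul hord_unif in
lemma ord_eq_zero_iff_residue' {π : O} (hπ : Irreducible π) (a : O) :
    ord a = 0 ↔ IsLocalRing.residue O a ≠ 0 := by
  have hdvd : π ∣ a ↔ (1 : ℕ∞) ≤ ord a := by
    simpa using ord_pow_dvd_iff' hord_top hord_mul hord_unif hπ 1 a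
  rw [Ne, IsLocalRing.residue_eq_zero_iff, hπ.maximalIdeal_eq, Ideal.mem_span_singleton, hdvd,
    ENat.one_le_iff_ne_zero, not_ne_iff]


end OrdLemmas


section ENatHelpers

lemma enat_iInf_attained {ι : Sort*} [Nonempty ι] (F : ι → ℕ∞) : ∃ i, F i = ⨅ j, F j := by
  have := ciInf_mem F
  obtain ⟨i, hi⟩ := this
  exact ⟨i, hi⟩

lemma enat_add_iInf {ι : Sort*} [Nonempty ι] (k : ℕ∞) (g : ι → ℕ∞) :
    ⨅ i, (k + g i) = k + ⨅ i, g i := by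
  refine le_antisymm ?_ (le_iInf fun i => add_le_add_right (iInf_le _ i) k)
  obtain ⟨i, hi⟩ := enat_iInf_attained g
  calc ⨅ j, (k + g j) ≤ k + g i := iInf_le _ i
    _ = k + ⨅ j, g j := by rw [hi]

lemma enat_add_left_cancel_zero {k : ℕ} {x : ℕ∞} (h : (k : ℕ∞) + x = k) : x = 0 := by
  rcases eq_or_ne x ⊤ with rfl | hx
  · simp at h
  · lift x to ℕ using hx
    norm_cast at h ⊢
    omega

end ENatHelpers

section VLemmas
variable {O : Type*} [CommRing O] [IsDomain O] [IsDiscreteValuationRing O]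
  {ord : O → ℕ∞}
  (hord_top : ∀ a : O, ord a = ⊤ ↔ a = 0)
  (hord_mul : ∀ a b : O, ord (a * b) = ord a + ord b)
  (hord_add : ∀ a b : O, min (ord a) (ord b) ≤ ord (a + b))
  (hord_unif : ∀ π : O, Irreducible π → ord π = 1)
  {e : ℕ}

lemma V_le (a : MvPowerSeries (Fin e) O) (d : Fin e →₀ ℕ) :
    coeffOrd ord e a ≤ ord (MvPowerSeries.coeff d a) := iInf_le _ d

lemma V_exists (a : MvPowerSeries (Fin e) O) :
    ∃ d, ord (MvPowerSeries.coeff d a) = coeffOrd ord e a :=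
  enat_iInf_attained _

include hord_top in
lemma V_eq_top_iff (a : MvPowerSeries (Fin e) O) : coeffOrd ord e a = ⊤ ↔ a = 0 := by
  rw [coeffOrd, iInf_eq_top]
  simp only [hord_top]
  exact ⟨fun h => MvPowerSeries.ext fun d => by simpa using h d,
    fun h d => by rw [h]; simp⟩

include hord_top in
lemma V_zero : coeffOrd ord e (0 : MvPowerSeries (Fin e) O) = ⊤ :=
  (V_eq_top_iff hord_top 0).mpr rfl

include hord_add in
lemma V_add (a b : MvPowerSeries (Fin e) O) :
    min (coeffOrd ord e a) (coeffOrd ord e b) ≤ coeffOrd ord e (a + b) := by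
  refine le_iInf fun d => ?_
  calc min (coeffOrd ord e a) (coeffOrd ord e b)
      ≤ min (ord (MvPowerSeries.coeff d a)) (ord (MvPowerSeries.coeff d b)) :=
        min_le_min (V_le a d) (V_le b d)
    _ ≤ ord (MvPowerSeries.coeff d a + MvPowerSeries.coeff d b) := hord_add _ _
    _ = ord (MvPowerSeries.coeff d (a + b)) := by rw [map_add]

include hord_top hord_mul in
lemma V_neg (a : MvPowerSeries (Fin e) O) :
    coeffOrd ord e (-a) = coeffOrd ord e a := by
  unfold coeffOrd
  refine iInf_congr fun d => ?_
  rw [map_neg, ord_neg' hord_top hord_mul]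

include hord_top hord_add in
lemma le_V_sum {ι : Type*} (s : Finset ι) (h : ι → MvPowerSeries (Fin e) O) {m : ℕ∞}
    (hm : ∀ i ∈ s, m ≤ coeffOrd ord e (h i)) :
    m ≤ coeffOrd ord e (∑ i ∈ s, h i) := by
  classical
  induction s using Finset.induction_on with
  | empty => simp [V_zero hord_top]
  | @insert i s hnotmem ih =>
      rw [Finset.sum_insert hnotmem]
      calc m ≤ min (coeffOrd ord e (h i)) (coeffOrd ord e (∑ j ∈ s, h j)) :=
            le_min (hm i (Finset.mem_insert_self i s))
              (ih fun j hj => hm j (Finset.mem_insert_of_mem hj))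
        _ ≤ _ := V_add hord_add _ _

include hord_top hord_mul hord_unif in
lemma V_C_pow_mul {π : O} (hπ : Irreducible π) (k : ℕ) (a : MvPowerSeries (Fin e) O) :
    coeffOrd ord e (MvPowerSeries.C (π ^ k) * a) = (k : ℕ∞) + coeffOrd ord e a := by
  unfold coeffOrd
  rw [← enat_add_iInf]
  refine iInf_congr fun d => ?_
  rw [MvPowerSeries.coeff_C_mul, ord_pow_mul' hord_top hord_mul hord_unif hπ]

include hord_top hord_mul hord_unif in
lemma V_mul (a b : MvPowerSeries (Fin e) O) :
    coeffOrd ord e (a * b) = coeffOrd ord e a + coeffOrd ord e b := by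
  classical
  obtain ⟨π, hπ⟩ := IsDiscreteValuationRing.exists_irreducible O
  rcases eq_or_ne a 0 with rfl | ha
  · rw [zero_mul]; simp [V_zero hord_top]
  rcases eq_or_ne b 0 with rfl | hb
  · rw [mul_zero]; simp [V_zero hord_top]
  have hka : coeffOrd ord e a ≠ ⊤ := fun h => ha ((V_eq_top_iff hord_top a).mp h)
  have hkb : coeffOrd ord e b ≠ ⊤ := fun h => hb ((V_eq_top_iff hord_top b).mp h)
  set ka := (coeffOrd ord e a).toNat with hka_def
  set kb := (coeffOrd ord e b).toNat with hkb_def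
  have hcast_a : (ka : ℕ∞) = coeffOrd ord e a := ENat.coe_toNat hka
  have hcast_b : (kb : ℕ∞) = coeffOrd ord e b := ENat.coe_toNat hkb
  -- factor out π ^ ka from a
  have hdvd_a : ∀ d, π ^ ka ∣ MvPowerSeries.coeff d a := fun d =>
    (ord_pow_dvd_iff' hord_top hord_mul hord_unif hπ ka _).mpr (hcast_a ▸ V_le a d)
  have hdvd_b : ∀ d, π ^ kb ∣ MvPowerSeries.coeff d b := fun d =>
    (ord_pow_dvd_iff' hord_top hord_mul hord_unif hπ kb _).mpr (hcast_b ▸ V_le b d)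
  set a' : MvPowerSeries (Fin e) O := fun d => (hdvd_a d).choose with ha'_def
  set b' : MvPowerSeries (Fin e) O := fun d => (hdvd_b d).choose with hb'_def
  have ha'_spec : ∀ d, MvPowerSeries.coeff d a = π ^ ka * MvPowerSeries.coeff d a' := by
    intro d; rw [MvPowerSeries.coeff_apply a' d, ha'_def]; exact (hdvd_a d).choose_spec
  have hb'_spec : ∀ d, MvPowerSeries.coeff d b = π ^ kb * MvPowerSeries.coeff d b' := by
    intro d; rw [MvPowerSeries.coeff_apply b' d, hb'_def]; exact (hdvd_b d).choose_spec
  have hafact : a = MvPowerSeries.C (π ^ ka) * a' := by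
    apply MvPowerSeries.ext; intro d
    rw [MvPowerSeries.coeff_C_mul]; exact ha'_spec d
  have hbfact : b = MvPowerSeries.C (π ^ kb) * b' := by
    apply MvPowerSeries.ext; intro d
    rw [MvPowerSeries.coeff_C_mul]; exact hb'_spec d
  -- V a' = 0 and V b' = 0
  have hVa' : coeffOrd ord e a' = 0 := by
    obtain ⟨d, hd⟩ := V_exists (ord := ord) a
    have := ha'_spec d
    have h2 : (ka : ℕ∞) + ord (MvPowerSeries.coeff d a') = ka := by
      rw [← ord_pow_mul' hord_top hord_mul hord_unif hπ, ← this, hd, hcast_a]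
    have h3 : ord (MvPowerSeries.coeff d a') = 0 := enat_add_left_cancel_zero h2
    exact le_antisymm (h3 ▸ V_le a' d) (zero_le)
  have hVb' : coeffOrd ord e b' = 0 := by
    obtain ⟨d, hd⟩ := V_exists (ord := ord) b
    have := hb'_spec d
    have h2 : (kb : ℕ∞) + ord (MvPowerSeries.coeff d b') = kb := by
      rw [← ord_pow_mul' hord_top hord_mul hord_unif hπ, ← this, hd, hcast_b]
    have h3 : ord (MvPowerSeries.coeff d b') = 0 := enat_add_left_cancel_zero h2
    exact le_antisymm (h3 ▸ V_le b' d) (zero_le)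
  -- V (a' * b') = 0 via residue field
  have hVab' : coeffOrd ord e (a' * b') = 0 := by
    set ρ := IsLocalRing.residue O
    set φ := MvPowerSeries.map ρ
    have hmapa : φ a' ≠ 0 := by
      obtain ⟨d, hd⟩ := V_exists (ord := ord) a'
      rw [hVa'] at hd
      have hres : ρ (MvPowerSeries.coeff d a') ≠ 0 :=
        (ord_eq_zero_iff_residue' hord_top hord_mul hord_unif hπ _).mp hd
      intro h0
      apply hres
      have : MvPowerSeries.coeff d (φ a') = 0 := by rw [h0]; simp
      rwa [MvPowerSeries.coeff_map] at this
    have hmapb : φ b' ≠ 0 := by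
      obtain ⟨d, hd⟩ := V_exists (ord := ord) b'
      rw [hVb'] at hd
      have hres : ρ (MvPowerSeries.coeff d b') ≠ 0 :=
        (ord_eq_zero_iff_residue' hord_top hord_mul hord_unif hπ _).mp hd
      intro h0
      apply hres
      have : MvPowerSeries.coeff d (φ b') = 0 := by rw [h0]; simp
      rwa [MvPowerSeries.coeff_map] at this
    have hmapab : φ (a' * b') ≠ 0 := by
      rw [map_mul]
      exact mul_ne_zero hmapa hmapb
    obtain ⟨d, hd⟩ : ∃ d, MvPowerSeries.coeff d (φ (a' * b')) ≠ 0 := by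
      by_contra h
      push_neg at h
      exact hmapab (MvPowerSeries.ext fun d => by simpa using h d)
    rw [MvPowerSeries.coeff_map] at hd
    have h0 : ord (MvPowerSeries.coeff d (a' * b')) = 0 :=
      (ord_eq_zero_iff_residue' hord_top hord_mul hord_unif hπ _).mpr hd
    exact le_antisymm (h0 ▸ V_le (a' * b') d) (zero_le)
  -- put it together
  have hfact : a * b = MvPowerSeries.C (π ^ (ka + kb)) * (a' * b') := by
    rw [hafact, hbfact, pow_add, map_mul]
    ring
  rw [hfact, V_C_pow_mul hord_top hord_mul hord_unif hπ, hVab', add_zero,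
    ← hcast_a, ← hcast_b]
  push_cast
  ring

end VLemmas



section ExpNegMul

lemma expNegMul_nonneg (t : ℝ) (m : ℕ∞) : 0 ≤ expNegMul t m := by
  unfold expNegMul
  split
  · norm_num
  · exact (Real.exp_pos _).le

lemma expNegMul_top (t : ℝ) : expNegMul t ⊤ = 0 := by simp [expNegMul]

lemma expNegMul_zero (t : ℝ) : expNegMul t 0 = 1 := by simp [expNegMul]

lemma expNegMul_coe (t : ℝ) (n : ℕ) : expNegMul t (n : ℕ∞) = Real.exp (-t * n) := by
  simp [expNegMul, ENat.coe_ne_top]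

lemma expNegMul_le_one {t : ℝ} (ht : 0 ≤ t) (m : ℕ∞) : expNegMul t m ≤ 1 := by
  unfold expNegMul
  split
  · norm_num
  · rw [Real.exp_le_one_iff]
    have : (0:ℝ) ≤ (ENat.toNat m : ℝ) := Nat.cast_nonneg _
    nlinarith

lemma expNegMul_pos {t : ℝ} {m : ℕ∞} (hm : m ≠ ⊤) : 0 < expNegMul t m := by
  unfold expNegMul
  rw [if_neg hm]
  exact Real.exp_pos _

lemma expNegMul_ne_top_of_pos {t : ℝ} {m : ℕ∞} (h : 0 < expNegMul t m) : m ≠ ⊤ := by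
  intro h0
  rw [h0, expNegMul_top] at h
  exact lt_irrefl _ h

lemma expNegMul_add (t : ℝ) (m n : ℕ∞) :
    expNegMul t (m + n) = expNegMul t m * expNegMul t n := by
  rcases eq_or_ne m ⊤ with rfl | hm
  · simp [expNegMul_top, top_add]
  rcases eq_or_ne n ⊤ with rfl | hn
  · simp [expNegMul_top, add_top]
  have hmn : m + n ≠ ⊤ := by
    rw [Ne, ENat.add_eq_top]
    tauto
  unfold expNegMul
  rw [if_neg hm, if_neg hn, if_neg hmn, ← Real.exp_add]
  congr 1
  lift m to ℕ using hm
  lift n to ℕ using hn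
  rw [← Nat.cast_add, ENat.toNat_coe, ENat.toNat_coe, ENat.toNat_coe]
  push_cast
  ring

lemma expNegMul_anti {t : ℝ} (ht : 0 ≤ t) {m n : ℕ∞} (h : m ≤ n) :
    expNegMul t n ≤ expNegMul t m := by
  rcases eq_or_ne n ⊤ with rfl | hn
  · rw [expNegMul_top]; exact expNegMul_nonneg t m
  have hm : m ≠ ⊤ := fun h0 => hn (top_le_iff.mp (h0 ▸ h))
  unfold expNegMul
  rw [if_neg hm, if_neg hn, Real.exp_le_exp]
  have hle : (ENat.toNat m : ℝ) ≤ (ENat.toNat n : ℝ) := by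
    exact_mod_cast ENat.toNat_le_toNat h hn
  nlinarith

lemma lt_of_expNegMul_lt {t : ℝ} (ht : 0 ≤ t) {m n : ℕ∞}
    (h : expNegMul t n < expNegMul t m) : m < n := by
  by_contra h0
  push_neg at h0
  exact absurd (expNegMul_anti ht h0) (not_le.mpr h)

end ExpNegMul

noncomputable def gTerm {O : Type*} [CommRing O] (ord : O → ℕ∞) (e : ℕ) (t r : ℝ)
    (f : PowerSeries (MvPowerSeries (Fin e) O)) (n : ℕ) : ℝ :=
  expNegMul t (coeffOrd ord e (PowerSeries.coeff (R := MvPowerSeries (Fin e) O) n f)) * r ^ n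

section GaussNorm
variable {O : Type*} [CommRing O] [IsDomain O] [IsDiscreteValuationRing O]
  {ord : O → ℕ∞}
  (hord_top : ∀ a : O, ord a = ⊤ ↔ a = 0)
  (hord_mul : ∀ a b : O, ord (a * b) = ord a + ord b)
  (hord_add : ∀ a b : O, min (ord a) (ord b) ≤ ord (a + b))
  (hord_unif : ∀ π : O, Irreducible π → ord π = 1)
  {e : ℕ} {r t : ℝ}

lemma gaussNorm_eq (f : PowerSeries (MvPowerSeries (Fin e) O)) :
    gaussNorm ord e t r f = ⨆ n, gTerm ord e t r f n := rfl

lemma gTerm_nonneg (hr0 : 0 ≤ r) (f : PowerSeries (MvPowerSeries (Fin e) O)) (n : ℕ) :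
    0 ≤ gTerm ord e t r f n :=
  mul_nonneg (expNegMul_nonneg _ _) (pow_nonneg hr0 n)

lemma gTerm_le_pow (ht : 0 ≤ t) (hr0 : 0 ≤ r) (f : PowerSeries (MvPowerSeries (Fin e) O))
    (n : ℕ) : gTerm ord e t r f n ≤ r ^ n :=
  mul_le_of_le_one_left (pow_nonneg hr0 n) (expNegMul_le_one ht _)

lemma gTerm_le_one (ht : 0 ≤ t) (hr0 : 0 ≤ r) (hr1 : r ≤ 1)
    (f : PowerSeries (MvPowerSeries (Fin e) O)) (n : ℕ) : gTerm ord e t r f n ≤ 1 :=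
  le_trans (gTerm_le_pow ht hr0 f n) (pow_le_one₀ hr0 hr1)

lemma gTerm_bdd (ht : 0 ≤ t) (hr0 : 0 ≤ r) (hr1 : r ≤ 1)
    (f : PowerSeries (MvPowerSeries (Fin e) O)) :
    BddAbove (Set.range (gTerm ord e t r f)) :=
  ⟨1, by rintro x ⟨n, rfl⟩; exact gTerm_le_one ht hr0 hr1 f n⟩

lemma le_gaussNorm (ht : 0 ≤ t) (hr0 : 0 ≤ r) (hr1 : r ≤ 1)
    (f : PowerSeries (MvPowerSeries (Fin e) O)) (n : ℕ) :
    gTerm ord e t r f n ≤ gaussNorm ord e t r f :=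
  le_ciSup (gTerm_bdd ht hr0 hr1 f) n

lemma gaussNorm_le {c : ℝ} (f : PowerSeries (MvPowerSeries (Fin e) O))
    (h : ∀ n, gTerm ord e t r f n ≤ c) : gaussNorm ord e t r f ≤ c :=
  ciSup_le h

lemma gaussNorm_nonneg (ht : 0 ≤ t) (hr0 : 0 ≤ r) (hr1 : r ≤ 1)
    (f : PowerSeries (MvPowerSeries (Fin e) O)) : 0 ≤ gaussNorm ord e t r f :=
  le_trans (gTerm_nonneg hr0 f 0) (le_gaussNorm ht hr0 hr1 f 0)

include hord_top in
lemma gTerm_pos (hr0 : 0 < r) {f : PowerSeries (MvPowerSeries (Fin e) O)} {n : ℕ}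
    (hn : PowerSeries.coeff (R := MvPowerSeries (Fin e) O) n f ≠ 0) :
    0 < gTerm ord e t r f n := by
  apply mul_pos _ (pow_pos hr0 n)
  apply expNegMul_pos
  rw [Ne, V_eq_top_iff hord_top]
  exact hn

include hord_top in
lemma gaussNorm_zero :
    gaussNorm ord e t r (0 : PowerSeries (MvPowerSeries (Fin e) O)) = 0 := by
  rw [gaussNorm_eq]
  have h : ∀ n, gTerm ord e t r (0 : PowerSeries (MvPowerSeries (Fin e) O)) n = 0 := by
    intro n
    unfold gTerm
    rw [map_zero, V_zero hord_top, expNegMul_top, zero_mul]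
  simp only [h]
  exact ciSup_const

include hord_top in
lemma gaussNorm_exists_max (ht : 0 ≤ t) (hr0 : 0 < r) (hr1 : r < 1)
    {f : PowerSeries (MvPowerSeries (Fin e) O)} (hf : f ≠ 0) :
    ∃ N, (∀ n, gTerm ord e t r f n ≤ gTerm ord e t r f N) ∧
      gaussNorm ord e t r f = gTerm ord e t r f N := by
  obtain ⟨ns, hns⟩ : ∃ n, PowerSeries.coeff (R := MvPowerSeries (Fin e) O) n f ≠ 0 := by
    by_contra h
    push_neg at h
    exact hf (PowerSeries.ext fun n => by simpa using h n)
  have hpos : 0 < gTerm ord e t r f ns := gTerm_pos hord_top hr0 hns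
  obtain ⟨M, hM⟩ := exists_pow_lt_of_lt_one hpos hr1
  have hnsM : ns < M + 1 := by
    by_contra h
    push_neg at h
    have : gTerm ord e t r f ns ≤ r ^ M :=
      le_trans (gTerm_le_pow ht hr0.le f ns)
        (pow_le_pow_of_le_one hr0.le hr1.le (by omega))
    exact absurd (lt_of_le_of_lt this hM) (lt_irrefl _)
  obtain ⟨N, hNmem, hNmax⟩ := Finset.exists_max_image (Finset.range (M + 1))
    (gTerm ord e t r f) ⟨ns, Finset.mem_range.mpr hnsM⟩
  have hmax : ∀ n, gTerm ord e t r f n ≤ gTerm ord e t r f N := by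
    intro n
    rcases lt_or_ge n (M + 1) with h | h
    · exact hNmax n (Finset.mem_range.mpr h)
    · calc gTerm ord e t r f n ≤ r ^ n := gTerm_le_pow ht hr0.le f n
        _ ≤ r ^ M := pow_le_pow_of_le_one hr0.le hr1.le (by omega)
        _ ≤ gTerm ord e t r f ns := hM.le
        _ ≤ gTerm ord e t r f N := hNmax ns (Finset.mem_range.mpr hnsM)
  exact ⟨N, hmax, le_antisymm (ciSup_le hmax) (le_ciSup (gTerm_bdd ht hr0.le hr1.le f) N)⟩

include hord_top in
lemma gaussNorm_pos (ht : 0 ≤ t) (hr0 : 0 < r) (hr1 : r < 1)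
    {f : PowerSeries (MvPowerSeries (Fin e) O)} (hf : f ≠ 0) :
    0 < gaussNorm ord e t r f := by
  obtain ⟨ns, hns⟩ : ∃ n, PowerSeries.coeff (R := MvPowerSeries (Fin e) O) n f ≠ 0 := by
    by_contra h
    push_neg at h
    exact hf (PowerSeries.ext fun n => by simpa using h n)
  exact lt_of_lt_of_le (gTerm_pos hord_top hr0 hns) (le_gaussNorm ht hr0.le hr1.le f ns)

include hord_top in
lemma gaussNorm_eq_zero_iff (ht : 0 ≤ t) (hr0 : 0 < r) (hr1 : r < 1)
    (f : PowerSeries (MvPowerSeries (Fin e) O)) :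
    gaussNorm ord e t r f = 0 ↔ f = 0 := by
  constructor
  · intro h
    by_contra hf
    exact absurd h (ne_of_gt (gaussNorm_pos hord_top ht hr0 hr1 hf))
  · rintro rfl
    exact gaussNorm_zero hord_top

include hord_top hord_mul in
lemma V_one : coeffOrd ord e (1 : MvPowerSeries (Fin e) O) = 0 := by
  apply le_antisymm _ (zero_le)
  have h := V_le (ord := ord) (1 : MvPowerSeries (Fin e) O) 0
  rwa [MvPowerSeries.coeff_zero_one, ord_one' hord_top hord_mul] at h

include hord_top hord_mul in
lemma gaussNorm_one (ht : 0 ≤ t) (hr0 : 0 ≤ r) (hr1 : r ≤ 1) :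
    gaussNorm ord e t r (1 : PowerSeries (MvPowerSeries (Fin e) O)) = 1 := by
  apply le_antisymm
  · exact gaussNorm_le _ (gTerm_le_one ht hr0 hr1 _)
  · have h0 : gTerm ord e t r (1 : PowerSeries (MvPowerSeries (Fin e) O)) 0 = 1 := by
      unfold gTerm
      rw [PowerSeries.coeff_zero_one, V_one hord_top hord_mul, expNegMul_zero, pow_zero,
        one_mul]
    calc (1:ℝ) = gTerm ord e t r 1 0 := h0.symm
      _ ≤ _ := le_gaussNorm ht hr0 hr1 _ 0

include hord_top hord_add in
lemma gaussNorm_add_le (ht : 0 ≤ t) (hr0 : 0 ≤ r) (hr1 : r ≤ 1)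
    (f g : PowerSeries (MvPowerSeries (Fin e) O)) :
    gaussNorm ord e t r (f + g) ≤ max (gaussNorm ord e t r f) (gaussNorm ord e t r g) := by
  apply gaussNorm_le
  intro n
  have hV := V_add (ord := ord) hord_add
    (PowerSeries.coeff (R := MvPowerSeries (Fin e) O) n f)
    (PowerSeries.coeff (R := MvPowerSeries (Fin e) O) n g)
  rw [← map_add] at hV
  have : gTerm ord e t r (f + g) n ≤ max (gTerm ord e t r f n) (gTerm ord e t r g n) := by
    unfold gTerm
    rcases min_cases (coeffOrd ord e (PowerSeries.coeff (R := MvPowerSeries (Fin e) O) n f))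
      (coeffOrd ord e (PowerSeries.coeff (R := MvPowerSeries (Fin e) O) n g)) with
      ⟨hmin, _⟩ | ⟨hmin, _⟩
    · apply le_max_of_le_left
      exact mul_le_mul_of_nonneg_right (expNegMul_anti ht (hmin ▸ hV)) (pow_nonneg hr0 n)
    · apply le_max_of_le_right
      exact mul_le_mul_of_nonneg_right (expNegMul_anti ht (hmin ▸ hV)) (pow_nonneg hr0 n)
  exact le_trans this (max_le_max (le_gaussNorm ht hr0 hr1 f n) (le_gaussNorm ht hr0 hr1 g n))

end GaussNorm

section GaussMul
variable {O : Type*} [CommRing O] [IsDomain O] [IsDiscreteValuationRing O]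
  {ord : O → ℕ∞}
  (hord_top : ∀ a : O, ord a = ⊤ ↔ a = 0)
  (hord_mul : ∀ a b : O, ord (a * b) = ord a + ord b)
  (hord_add : ∀ a b : O, min (ord a) (ord b) ≤ ord (a + b))
  (hord_unif : ∀ π : O, Irreducible π → ord π = 1)
  {e : ℕ} {r t : ℝ}

include hord_top hord_mul hord_add hord_unif in
lemma gaussNorm_mul (ht : 0 < t) (hr0 : 0 < r) (hr1 : r < 1)
    (f g : PowerSeries (MvPowerSeries (Fin e) O)) :
    gaussNorm ord e t r (f * g) = gaussNorm ord e t r f * gaussNorm ord e t r g := by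
  classical
  rcases eq_or_ne f 0 with rfl | hf
  · rw [zero_mul, gaussNorm_zero hord_top, zero_mul]
  rcases eq_or_ne g 0 with rfl | hg
  · rw [mul_zero, gaussNorm_zero hord_top, mul_zero]
  set cf := PowerSeries.coeff (R := MvPowerSeries (Fin e) O) with hcf
  -- upper bound
  have upper : gaussNorm ord e t r (f * g) ≤
      gaussNorm ord e t r f * gaussNorm ord e t r g := by
    apply gaussNorm_le
    intro n
    have hne : (Finset.HasAntidiagonal.antidiagonal n).Nonempty := ⟨(0, n), by simp⟩
    obtain ⟨p, hp, hinf⟩ := Finset.exists_mem_eq_inf (Finset.HasAntidiagonal.antidiagonal n) hne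
      (fun p => coeffOrd ord e (cf p.1 f) + coeffOrd ord e (cf p.2 g))
    have hVn : coeffOrd ord e (cf p.1 f) + coeffOrd ord e (cf p.2 g) ≤
        coeffOrd ord e (cf n (f * g)) := by
      rw [← hinf, hcf, PowerSeries.coeff_mul]
      apply le_V_sum hord_top hord_add
      intro q hq
      rw [V_mul hord_top hord_mul hord_unif]
      exact Finset.inf_le hq
    have hpsum : p.1 + p.2 = n := Finset.HasAntidiagonal.mem_antidiagonal.mp hp
    calc gTerm ord e t r (f * g) n
        ≤ expNegMul t (coeffOrd ord e (cf p.1 f) + coeffOrd ord e (cf p.2 g)) * r ^ n :=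
          mul_le_mul_of_nonneg_right (expNegMul_anti ht.le hVn) (pow_nonneg hr0.le n)
      _ = gTerm ord e t r f p.1 * gTerm ord e t r g p.2 := by
          unfold gTerm
          rw [expNegMul_add, ← hpsum, pow_add, ← hcf]
          ring
      _ ≤ gaussNorm ord e t r f * gaussNorm ord e t r g :=
          mul_le_mul (le_gaussNorm ht.le hr0.le hr1.le f p.1)
            (le_gaussNorm ht.le hr0.le hr1.le g p.2)
            (gTerm_nonneg hr0.le g p.2)
            (gaussNorm_nonneg ht.le hr0.le hr1.le f)
  -- lower bound setup: minimal maximizers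
  obtain ⟨Nf, _, hNf⟩ := gaussNorm_exists_max hord_top ht.le hr0 hr1 hf
  obtain ⟨Ng, _, hNg⟩ := gaussNorm_exists_max hord_top ht.le hr0 hr1 hg
  have hSf : ({n | gTerm ord e t r f n = gaussNorm ord e t r f} : Set ℕ).Nonempty :=
    ⟨Nf, hNf.symm⟩
  have hSg : ({n | gTerm ord e t r g n = gaussNorm ord e t r g} : Set ℕ).Nonempty :=
    ⟨Ng, hNg.symm⟩
  set n0 := sInf {n | gTerm ord e t r f n = gaussNorm ord e t r f} with hn0_def
  set m0 := sInf {n | gTerm ord e t r g n = gaussNorm ord e t r g} with hm0_def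
  have hn0 : gTerm ord e t r f n0 = gaussNorm ord e t r f := Nat.sInf_mem hSf
  have hm0 : gTerm ord e t r g m0 = gaussNorm ord e t r g := Nat.sInf_mem hSg
  have hGf_pos : 0 < gaussNorm ord e t r f := gaussNorm_pos hord_top ht.le hr0 hr1 hf
  have hGg_pos : 0 < gaussNorm ord e t r g := gaussNorm_pos hord_top ht.le hr0 hr1 hg
  have hlt_f : ∀ i, i < n0 → gTerm ord e t r f i < gaussNorm ord e t r f := by
    intro i hi
    refine lt_of_le_of_ne (le_gaussNorm ht.le hr0.le hr1.le f i) fun h => ?_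
    exact Nat.notMem_of_lt_sInf hi h
  have hlt_g : ∀ i, i < m0 → gTerm ord e t r g i < gaussNorm ord e t r g := by
    intro i hi
    refine lt_of_le_of_ne (le_gaussNorm ht.le hr0.le hr1.le g i) fun h => ?_
    exact Nat.notMem_of_lt_sInf hi h
  -- finiteness of the key valuations
  have hVf_pos : 0 < expNegMul t (coeffOrd ord e (cf n0 f)) := by
    rcases (expNegMul_nonneg t (coeffOrd ord e (cf n0 f))).lt_or_eq with h | h
    · exact h
    · exfalso
      have : gTerm ord e t r f n0 = 0 := by
        unfold gTerm; rw [← hcf, ← h, zero_mul]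
      rw [hn0] at this
      exact absurd this (ne_of_gt hGf_pos)
  have hVg_pos : 0 < expNegMul t (coeffOrd ord e (cf m0 g)) := by
    rcases (expNegMul_nonneg t (coeffOrd ord e (cf m0 g))).lt_or_eq with h | h
    · exact h
    · exfalso
      have : gTerm ord e t r g m0 = 0 := by
        unfold gTerm; rw [← hcf, ← h, zero_mul]
      rw [hm0] at this
      exact absurd this (ne_of_gt hGg_pos)
  have hVf_ne : coeffOrd ord e (cf n0 f) ≠ ⊤ := expNegMul_ne_top_of_pos hVf_pos
  have hVg_ne : coeffOrd ord e (cf m0 g) ≠ ⊤ := expNegMul_ne_top_of_pos hVg_pos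
  have hv0_ne : coeffOrd ord e (cf n0 f) + coeffOrd ord e (cf m0 g) ≠ ⊤ :=
    fun h => (ENat.add_eq_top.mp h).elim hVf_ne hVg_ne
  -- key strict inequality for off-diagonal terms
  have key : ∀ p ∈ Finset.HasAntidiagonal.antidiagonal (n0 + m0), p ≠ (n0, m0) →
      coeffOrd ord e (cf n0 f) + coeffOrd ord e (cf m0 g) <
        coeffOrd ord e (cf p.1 f) + coeffOrd ord e (cf p.2 g) := by
    intro p hp hpne
    have hsum : p.1 + p.2 = n0 + m0 := Finset.HasAntidiagonal.mem_antidiagonal.mp hp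
    have hFfFg : gTerm ord e t r f p.1 * gTerm ord e t r g p.2 <
        gaussNorm ord e t r f * gaussNorm ord e t r g := by
      rcases lt_trichotomy p.1 n0 with h | h | h
      · calc gTerm ord e t r f p.1 * gTerm ord e t r g p.2
            ≤ gTerm ord e t r f p.1 * gaussNorm ord e t r g :=
              mul_le_mul_of_nonneg_left (le_gaussNorm ht.le hr0.le hr1.le g p.2)
                (gTerm_nonneg hr0.le f p.1)
          _ < gaussNorm ord e t r f * gaussNorm ord e t r g :=
              mul_lt_mul_of_pos_right (hlt_f p.1 h) hGg_pos
      · exact absurd (Prod.ext h (by omega)) hpne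
      · have h2 : p.2 < m0 := by omega
        calc gTerm ord e t r f p.1 * gTerm ord e t r g p.2
            ≤ gaussNorm ord e t r f * gTerm ord e t r g p.2 :=
              mul_le_mul_of_nonneg_right (le_gaussNorm ht.le hr0.le hr1.le f p.1)
                (gTerm_nonneg hr0.le g p.2)
          _ < gaussNorm ord e t r f * gaussNorm ord e t r g :=
              mul_lt_mul_of_pos_left (hlt_g p.2 h2) hGf_pos
    have hrw1 : gTerm ord e t r f p.1 * gTerm ord e t r g p.2 =
        expNegMul t (coeffOrd ord e (cf p.1 f) + coeffOrd ord e (cf p.2 g)) *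
          r ^ (n0 + m0) := by
      unfold gTerm
      rw [expNegMul_add, ← hsum, pow_add, ← hcf]
      ring
    have hrw2 : gaussNorm ord e t r f * gaussNorm ord e t r g =
        expNegMul t (coeffOrd ord e (cf n0 f) + coeffOrd ord e (cf m0 g)) *
          r ^ (n0 + m0) := by
      rw [← hn0, ← hm0]
      unfold gTerm
      rw [expNegMul_add, pow_add, ← hcf]
      ring
    rw [hrw1, hrw2] at hFfFg
    have hE : expNegMul t (coeffOrd ord e (cf p.1 f) + coeffOrd ord e (cf p.2 g)) <
        expNegMul t (coeffOrd ord e (cf n0 f) + coeffOrd ord e (cf m0 g)) :=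
      lt_of_mul_lt_mul_right hFfFg (pow_nonneg hr0.le _)
    exact lt_of_expNegMul_lt ht.le hE
  -- valuation of the (n0+m0)-th coefficient of f*g
  have hmem : (n0, m0) ∈ Finset.HasAntidiagonal.antidiagonal (n0 + m0) := Finset.HasAntidiagonal.mem_antidiagonal.mpr rfl
  have hsplit : cf (n0 + m0) (f * g) = cf n0 f * cf m0 g +
      ∑ p ∈ (Finset.HasAntidiagonal.antidiagonal (n0 + m0)).erase (n0, m0), cf p.1 f * cf p.2 g := by
    rw [hcf, PowerSeries.coeff_mul, ← Finset.add_sum_erase _ _ hmem, ← hcf]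
  have hmain : coeffOrd ord e (cf n0 f * cf m0 g) =
      coeffOrd ord e (cf n0 f) + coeffOrd ord e (cf m0 g) :=
    V_mul hord_top hord_mul hord_unif _ _
  have hrest : coeffOrd ord e (cf n0 f) + coeffOrd ord e (cf m0 g) + 1 ≤
      coeffOrd ord e (∑ p ∈ (Finset.HasAntidiagonal.antidiagonal (n0 + m0)).erase (n0, m0),
        cf p.1 f * cf p.2 g) := by
    apply le_V_sum hord_top hord_add
    intro p hp
    rw [V_mul hord_top hord_mul hord_unif, ENat.add_one_le_iff hv0_ne]
    exact key p (Finset.mem_of_mem_erase hp) (Finset.ne_of_mem_erase hp)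
  have hv0_lt_succ : coeffOrd ord e (cf n0 f) + coeffOrd ord e (cf m0 g) <
      coeffOrd ord e (cf n0 f) + coeffOrd ord e (cf m0 g) + 1 := by
    obtain ⟨k, hk⟩ := WithTop.ne_top_iff_exists.mp hv0_ne
    rw [← hk]
    exact ENat.lt_add_one_iff (ENat.coe_ne_top k) |>.mpr le_rfl
  have hVN : coeffOrd ord e (cf (n0 + m0) (f * g)) =
      coeffOrd ord e (cf n0 f) + coeffOrd ord e (cf m0 g) := by
    rw [hsplit]
    set mn := cf n0 f * cf m0 g
    set rest := ∑ p ∈ (Finset.HasAntidiagonal.antidiagonal (n0 + m0)).erase (n0, m0), cf p.1 f * cf p.2 g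
    apply le_antisymm
    · by_contra hlt
      push_neg at hlt
      have h1 : min (coeffOrd ord e (mn + rest)) (coeffOrd ord e (-rest)) ≤
          coeffOrd ord e mn := by
        have := V_add (ord := ord) hord_add (mn + rest) (-rest)
        simpa using this
      rw [V_neg hord_top hord_mul, hmain] at h1
      have h2 : coeffOrd ord e (cf n0 f) + coeffOrd ord e (cf m0 g) <
          coeffOrd ord e rest := lt_of_lt_of_le hv0_lt_succ hrest
      exact absurd h1 (not_le.mpr (lt_min hlt h2))
    · have := V_add (ord := ord) hord_add mn rest
      rw [hmain] at this
      refine le_trans (le_min (le_refl _) (le_trans le_self_add hrest)) this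
  -- conclude
  have hterm : gTerm ord e t r (f * g) (n0 + m0) =
      gaussNorm ord e t r f * gaussNorm ord e t r g := by
    unfold gTerm
    rw [← hcf, hVN, expNegMul_add, ← hn0, ← hm0]
    unfold gTerm
    rw [pow_add, ← hcf]
    ring
  exact le_antisymm upper (hterm ▸ le_gaussNorm ht.le hr0.le hr1.le (f * g) (n0 + m0))

end GaussMul

section Tendsto
variable {O : Type*} [CommRing O] [IsDomain O] [IsDiscreteValuationRing O]
  {ord : O → ℕ∞} {e : ℕ} {r : ℝ}

lemma gaussNorm_tendsto (hr0 : 0 < r) (hr1 : r < 1)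
    (f : PowerSeries (MvPowerSeries (Fin e) O))
    (hex : ∃ n, coeffOrd ord e (PowerSeries.coeff (R := MvPowerSeries (Fin e) O) n f) = 0) :
    Tendsto (fun t' : ℝ => gaussNorm ord e t' r f) atTop
      (nhds (r ^ sInf {n : ℕ |
        coeffOrd ord e (PowerSeries.coeff (R := MvPowerSeries (Fin e) O) n f) = 0})) := by
  set S := {n : ℕ | coeffOrd ord e (PowerSeries.coeff (R := MvPowerSeries (Fin e) O) n f) = 0}
    with hS
  set n0 := sInf S with hn0_def
  have hn0S : n0 ∈ S := Nat.sInf_mem hex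
  have hn0V : coeffOrd ord e (PowerSeries.coeff (R := MvPowerSeries (Fin e) O) n0 f) = 0 := hn0S
  have hlow : ∀ᶠ t' in (atTop : Filter ℝ), r ^ n0 ≤ gaussNorm ord e t' r f := by
    filter_upwards [eventually_ge_atTop (0:ℝ)] with t' ht'
    have hterm : gTerm ord e t' r f n0 = r ^ n0 := by
      unfold gTerm
      rw [hn0V, expNegMul_zero, one_mul]
    rw [← hterm]
    exact le_gaussNorm ht' hr0.le hr1.le f n0
  have hup : ∀ᶠ t' in (atTop : Filter ℝ),
      gaussNorm ord e t' r f ≤ max (r ^ n0) (Real.exp (-t')) := by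
    filter_upwards [eventually_ge_atTop (0:ℝ)] with t' ht'
    apply gaussNorm_le
    intro n
    rcases eq_or_ne (coeffOrd ord e (PowerSeries.coeff (R := MvPowerSeries (Fin e) O) n f)) 0
      with h | h
    · apply le_max_of_le_left
      have hterm : gTerm ord e t' r f n = r ^ n := by
        unfold gTerm
        rw [h, expNegMul_zero, one_mul]
      rw [hterm]
      exact pow_le_pow_of_le_one hr0.le hr1.le (Nat.sInf_le h)
    · apply le_max_of_le_right
      have h1 : (1:ℕ∞) ≤ coeffOrd ord e (PowerSeries.coeff (R := MvPowerSeries (Fin e) O) n f) :=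
        ENat.one_le_iff_ne_zero.mpr h
      calc gTerm ord e t' r f n
          ≤ expNegMul t' (coeffOrd ord e
              (PowerSeries.coeff (R := MvPowerSeries (Fin e) O) n f)) * 1 :=
            mul_le_mul_of_nonneg_left (pow_le_one₀ hr0.le hr1.le) (expNegMul_nonneg _ _)
        _ = expNegMul t' (coeffOrd ord e
              (PowerSeries.coeff (R := MvPowerSeries (Fin e) O) n f)) := mul_one _
        _ ≤ expNegMul t' ((1:ℕ) : ℕ∞) := expNegMul_anti ht' (by exact_mod_cast h1)
        _ = Real.exp (-t') := by rw [expNegMul_coe]; norm_num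
  have hmax : Tendsto (fun t' : ℝ => max (r ^ n0) (Real.exp (-t'))) atTop
      (nhds (max (r ^ n0) 0)) :=
    tendsto_const_nhds.max (Real.tendsto_exp_atBot.comp tendsto_neg_atTop_atBot)
  rw [max_eq_left (pow_pos hr0 n0).le] at hmax
  exact tendsto_of_tendsto_of_tendsto_of_le_of_le' tendsto_const_nhds hmax hlow hup

end Tendsto

/-- Let `O` be a discrete valuation ring with normalized additive valuation
`ord` (valued in `ℕ∞`, with `ord a = ∞ ↔ a = 0` and `ord π = 1` for uniformizers `π`).  Let
`A = R[[x₁]]` with `R = O[[x₂,…,x_{e+1}]]`, let `v : R → ℕ∞` be the infimum of `ord` over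
coefficients, and for `0 < r < 1`, `t > 0` let `|f|_{t,r} = sup_n exp(-t·v(aₙ))·rⁿ`.  Then
(i) `|·|_{t,r}` is a multiplicative non-archimedean norm on `A`; and (ii) if some coefficient of
`f` satisfies `v(aₙ) = 0`, then for fixed `r`, as `t → ∞` the norms `|f|_{t,r}` converge to
`r ^ n₀` where `n₀ = min {n : v (aₙ) = 0}`. -/
theorem stmt_6 {O : Type*} [CommRing O] [IsDomain O] [IsDiscreteValuationRing O]
    (ord : O → ℕ∞)
    (hord_top : ∀ a : O, ord a = ⊤ ↔ a = 0)
    (hord_mul : ∀ a b : O, ord (a * b) = ord a + ord b)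
    (hord_add : ∀ a b : O, min (ord a) (ord b) ≤ ord (a + b))
    (hord_unif : ∀ π : O, Irreducible π → ord π = 1)
    (e : ℕ) (r t : ℝ) (hr0 : 0 < r) (hr1 : r < 1) (ht : 0 < t) :
    ((∀ f : PowerSeries (MvPowerSeries (Fin e) O), gaussNorm ord e t r f = 0 ↔ f = 0) ∧
      gaussNorm ord e t r 1 = 1 ∧
      (∀ f g : PowerSeries (MvPowerSeries (Fin e) O),
        gaussNorm ord e t r (f * g) = gaussNorm ord e t r f * gaussNorm ord e t r g) ∧
      (∀ f g : PowerSeries (MvPowerSeries (Fin e) O),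
        gaussNorm ord e t r (f + g) ≤ max (gaussNorm ord e t r f) (gaussNorm ord e t r g))) ∧
    (∀ f : PowerSeries (MvPowerSeries (Fin e) O),
      (∃ n : ℕ, coeffOrd ord e (PowerSeries.coeff (R := MvPowerSeries (Fin e) O) n f) = 0) →
        Tendsto (fun t' : ℝ => gaussNorm ord e t' r f) atTop
          (nhds (r ^ sInf {n : ℕ |
            coeffOrd ord e (PowerSeries.coeff (R := MvPowerSeries (Fin e) O) n f) = 0}))) :=
  ⟨⟨fun f => gaussNorm_eq_zero_iff hord_top ht.le hr0 hr1 f,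
    gaussNorm_one hord_top hord_mul ht.le hr0.le hr1.le,
    fun f g => gaussNorm_mul hord_top hord_mul hord_add hord_unif ht hr0 hr1 f g,
    fun f g => gaussNorm_add_le hord_top hord_add ht.le hr0.le hr1.le f g⟩,
    fun f hex => gaussNorm_tendsto hr0 hr1 f hex⟩
end
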